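/- Let d ≥ 2. For every κ > 0 there exists a constant C = C(d,κ) such that for all ε ∈ (0,1], all k₀ ∈ ℤ^d with |k₀| ≤ ε^{-1}, all α ∈ ℝ, all β ≥ 1, and all σ, σ' ∈ {−1,+1} with (σ,σ') ≠ (1,1): ∑_{k,k' ∈ ℤ^d, |k| < ε^{-1}, |k'| < ε^{-1}} 1/| |k|² + σ'|k'|² + σ|k₀ − k − k'|² − α + iβ | ≤ C ε^{2 − 2d − κ}, where |z| denotes the modulus of the complex number z. -/

import Mathlib

open scoped BigOperators Classical

noncomputable section

namespace KWE

/-- squared Euclidean norm of a lattice point -/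
def nsq {d : ℕ} (k : Fin d → ℤ) : ℝ := ∑ i, ((k i : ℝ))^2

/-- Euclidean norm of a lattice point -/
def znorm {d : ℕ} (k : Fin d → ℤ) : ℝ := Real.sqrt (nsq k)


/-- box of side 2T+1 -/
def Box (d T : ℕ) : Finset (Fin d → ℤ) := Finset.Icc (fun _ => -(T:ℤ)) (fun _ => (T:ℤ))

def dotz {d : ℕ} (u w : Fin d → ℤ) : ℤ := ∑ i, u i * w i

/-- decay weight -/
def DD (x : ℝ) : ℝ := (max 1 |x|)⁻¹

lemma DD_nonneg (x : ℝ) : 0 ≤ DD x := by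
  unfold DD; positivity

lemma DD_le_one (x : ℝ) : DD x ≤ 1 := by
  unfold DD
  rw [inv_le_one_iff₀]
  right; exact le_max_left _ _

lemma DD_le (x y : ℝ) (h : max 1 |y| ≤ max 1 |x|) : DD x ≤ DD y := by
  unfold DD
  apply inv_anti₀ (by positivity) h

lemma DD_neg (x : ℝ) : DD (-x) = DD x := by unfold DD; rw [abs_neg]

lemma mem_Box {d T : ℕ} {u : Fin d → ℤ} : u ∈ Box d T ↔ ∀ i, -(T:ℤ) ≤ u i ∧ u i ≤ T := by
  simp [Box, Finset.mem_Icc, Pi.le_def, forall_and]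

lemma card_Box (d T : ℕ) : (Box d T).card = (2*T+1)^d := by
  rw [Box, Pi.card_Icc]
  simp only [Int.card_Icc]
  rw [Finset.prod_const, Finset.card_univ, Fintype.card_fin]
  congr 1
  omega

/-- harmonic sum -/
def hsum (n : ℕ) : ℝ := ∑ j ∈ Finset.Icc 1 n, (j:ℝ)⁻¹

lemma hsum_nonneg (n : ℕ) : 0 ≤ hsum n := by
  apply Finset.sum_nonneg; intro i _; positivity

lemma hsum_mono {m n : ℕ} (h : m ≤ n) : hsum m ≤ hsum n := by
  apply Finset.sum_le_sum_of_subset_of_nonneg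
  · exact Finset.Icc_subset_Icc_right h
  · intro i _ _; positivity

lemma hsum_le_log (n : ℕ) : hsum n ≤ 1 + Real.log n := by
  induction n with
  | zero => simp [hsum]
  | succ m ih =>
    rcases Nat.eq_zero_or_pos m with hm | hm
    · subst hm; simp [hsum]
    · have h1 : hsum (m+1) = hsum m + ((m:ℝ)+1)⁻¹ := by
        unfold hsum
        rw [Finset.sum_Icc_succ_top (by omega : 1 ≤ m + 1)]
        push_cast; ring_nf
      have hlog : Real.log m + ((m:ℝ)+1)⁻¹ ≤ Real.log (m+1) := by
        have hm' : (0:ℝ) < m := by exact_mod_cast hm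
        have := Real.log_le_sub_one_of_pos (x := (m:ℝ)/(m+1)) (by positivity)
        rw [Real.log_div (by positivity) (by positivity)] at this
        have : Real.log m - Real.log (m+1) ≤ -((m:ℝ)+1)⁻¹ := by
          calc Real.log m - Real.log (m+1) ≤ (m:ℝ)/(m+1) - 1 := this
            _ = -((m:ℝ)+1)⁻¹ := by field_simp; ring
        linarith
      rw [h1]
      push_cast
      linarith

/-- shifted harmonic comparison -/
lemma shift_sum (a b : ℤ) (ha : 1 ≤ a) :
    ∑ n ∈ Finset.Icc a b, ((n:ℝ))⁻¹ ≤ hsum (b - a + 1).toNat := by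
  have e : ∑ n ∈ Finset.Icc a b, ((n:ℝ))⁻¹
      = ∑ j ∈ Finset.Icc 1 (b - a + 1).toNat, (((a + (j:ℤ) - 1 : ℤ)):ℝ)⁻¹ := by
    apply Finset.sum_nbij' (fun n => (n - a + 1).toNat) (fun j => a + (j:ℤ) - 1)
    · intro n hn; simp only [Finset.mem_Icc] at *; omega
    · intro j hj; simp only [Finset.mem_Icc] at *; omega
    · intro n hn; simp only [Finset.mem_Icc] at hn; omega
    · intro j hj; simp only [Finset.mem_Icc] at hj; omega
    · intro n hn; simp only [Finset.mem_Icc] at hn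
      congr 1; congr 1; omega
  rw [e]
  apply Finset.sum_le_sum
  intro j hj
  simp only [Finset.mem_Icc] at hj
  have h1 : (1:ℝ) ≤ (j:ℝ) := by exact_mod_cast hj.1
  have h2 : ((j:ℤ):ℝ) ≤ ((a + (j:ℤ) - 1 : ℤ):ℝ) := by exact_mod_cast (by omega : (j:ℤ) ≤ a + j - 1)
  apply inv_anti₀ (by positivity)
  push_cast at h2 ⊢; linarith

/-- sum of DD over an integer interval -/
lemma sum_DD_int (A B : ℤ) :
    ∑ n ∈ Finset.Icc A B, DD ((n:ℤ):ℝ) ≤ 1 + 2 * hsum (B - A + 1).toNat := by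
  have key : ∀ n ∈ Finset.Icc A B, DD ((n:ℤ):ℝ)
      ≤ (if n = 0 then (1:ℝ) else 0) + ((if 1 ≤ n then ((n:ℝ))⁻¹ else 0)
        + (if n ≤ -1 then ((-(n:ℝ)))⁻¹ else 0)) := by
    intro n _
    rcases lt_trichotomy n 0 with h | h | h
    · have h1 : ¬ (n = 0) := by omega
      have h2 : ¬ (1 ≤ n) := by omega
      have h3 : n ≤ -1 := by omega
      simp only [if_neg h1, if_neg h2, if_pos h3]
      have : DD ((n:ℤ):ℝ) ≤ (-(n:ℝ))⁻¹ := by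
        unfold DD
        have hn : (1:ℝ) ≤ -(n:ℝ) := by exact_mod_cast (by omega : (1:ℤ) ≤ -n)
        have : max 1 |((n:ℤ):ℝ)| = -(n:ℝ) := by
          rw [abs_of_neg (by exact_mod_cast h)]
          exact max_eq_right hn
        rw [this]
      linarith
    · subst h; simp [DD]
    · have h1 : ¬ (n = 0) := by omega
      have h2 : 1 ≤ n := by omega
      have h3 : ¬ (n ≤ -1) := by omega
      simp only [if_neg h1, if_pos h2, if_neg h3]
      have hn : (1:ℝ) ≤ (n:ℝ) := by exact_mod_cast h2
      have : DD ((n:ℤ):ℝ) = ((n:ℝ))⁻¹ := by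
        unfold DD
        rw [abs_of_pos (by linarith), max_eq_right hn]
      rw [this]
      have : (0:ℝ) ≤ (-(n:ℝ))⁻¹ → True := fun _ => trivial
      simp
  calc ∑ n ∈ Finset.Icc A B, DD ((n:ℤ):ℝ)
      ≤ ∑ n ∈ Finset.Icc A B, ((if n = 0 then (1:ℝ) else 0) + ((if 1 ≤ n then ((n:ℝ))⁻¹ else 0)
        + (if n ≤ -1 then ((-(n:ℝ)))⁻¹ else 0))) := Finset.sum_le_sum key
    _ ≤ 1 + 2 * hsum (B - A + 1).toNat := by
        rw [Finset.sum_add_distrib, Finset.sum_add_distrib]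
        have t1 : ∑ n ∈ Finset.Icc A B, (if n = 0 then (1:ℝ) else 0) ≤ 1 := by
          rw [Finset.sum_ite_eq' (Finset.Icc A B) 0 (fun _ => (1:ℝ))]
          split <;> norm_num
        have t2 : ∑ n ∈ Finset.Icc A B, (if 1 ≤ n then ((n:ℝ))⁻¹ else 0)
            ≤ hsum (B - A + 1).toNat := by
          rw [Finset.sum_ite, Finset.sum_const_zero, add_zero]
          have hf : Finset.filter (fun n => 1 ≤ n) (Finset.Icc A B) = Finset.Icc (max A 1) B := by
            ext n; simp only [Finset.mem_filter, Finset.mem_Icc]; omega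
          rw [hf]
          calc ∑ n ∈ Finset.Icc (max A 1) B, ((n:ℝ))⁻¹ ≤ hsum (B - max A 1 + 1).toNat :=
                shift_sum _ _ (le_max_right _ _)
            _ ≤ hsum (B - A + 1).toNat := hsum_mono (by omega)
        have t3 : ∑ n ∈ Finset.Icc A B, (if n ≤ -1 then ((-(n:ℝ)))⁻¹ else 0)
            ≤ hsum (B - A + 1).toNat := by
          have e : ∑ n ∈ Finset.Icc A B, (if n ≤ -1 then ((-(n:ℝ)))⁻¹ else 0)
              = ∑ n ∈ Finset.Icc (-B) (-A), (if 1 ≤ n then ((n:ℝ))⁻¹ else 0) := by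
            apply Finset.sum_nbij' (fun n => -n) (fun n => -n)
            · intro n hn; simp only [Finset.mem_Icc] at *; omega
            · intro n hn; simp only [Finset.mem_Icc] at *; omega
            · intro n _; ring
            · intro n _; ring
            · intro n _
              by_cases h : n ≤ -1
              · rw [if_pos h, if_pos (by omega : 1 ≤ -n)]; push_cast; ring_nf
              · rw [if_neg h, if_neg (by omega : ¬ (1 ≤ -n))]
          rw [e, Finset.sum_ite, Finset.sum_const_zero, add_zero]
          have hf : Finset.filter (fun n => 1 ≤ n) (Finset.Icc (-B) (-A)) = Finset.Icc (max (-B) 1) (-A) := by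
            ext n; simp only [Finset.mem_filter, Finset.mem_Icc]; omega
          rw [hf]
          calc ∑ n ∈ Finset.Icc (max (-B) 1) (-A), ((n:ℝ))⁻¹ ≤ hsum ((-A) - max (-B) 1 + 1).toNat :=
                shift_sum _ _ (le_max_right _ _)
            _ ≤ hsum (B - A + 1).toNat := hsum_mono (by omega)
        linarith

/-- Claim II: sum of DD(2m+c) over integer interval -/
lemma sum_DD_shift (A B : ℤ) (c : ℝ) :
    ∑ m ∈ Finset.Icc A B, DD (2*(m:ℝ) + c) ≤ 1 + 2 * hsum (B - A + 1).toNat := by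
  set m₀ : ℤ := ⌊(1 - c)/2⌋ with hm₀
  have hfl : ((m₀:ℝ)) ≤ (1-c)/2 := Int.floor_le ((1 - c)/2)
  have hfg : (1-c)/2 - 1 < (m₀:ℝ) := Int.sub_one_lt_floor ((1 - c)/2)
  have hm₀1 : -1 < 2*(m₀:ℝ) + c ∧ 2*(m₀:ℝ) + c ≤ 1 := by
    constructor <;> [linarith; linarith]
  clear_value m₀
  clear hfl hfg hm₀
  have key : ∀ m : ℤ, DD (2*(m:ℝ) + c) ≤ DD (((m - m₀ : ℤ)):ℝ) := by
    intro m
    apply DD_le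
    rcases eq_or_ne m m₀ with h | h
    · subst h; simp
    · have h0 : (1:ℤ) ≤ |m - m₀| := Int.one_le_abs (by omega)
      have h1 : (1:ℝ) ≤ |(((m - m₀:ℤ)):ℝ)| := by
        have e2 : |(((m - m₀:ℤ)):ℝ)| = (( |m - m₀| :ℤ):ℝ) := by
          rw [Int.cast_abs]
        rw [e2]; exact_mod_cast h0
      have h2 : |(((m - m₀:ℤ)):ℝ)| ≤ |2*(m:ℝ) + c| := by
        have h3 : |2*((m:ℝ) - (m₀:ℝ))| ≤ |2*(m:ℝ) + c| + |2*(m₀:ℝ) + c| := by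
          have e1 : 2*((m:ℝ) - (m₀:ℝ)) = (2*(m:ℝ) + c) + (-(2*(m₀:ℝ) + c)) := by ring
          rw [e1]
          calc |(2*(m:ℝ) + c) + (-(2*(m₀:ℝ) + c))| ≤ |2*(m:ℝ) + c| + |(-(2*(m₀:ℝ) + c))| :=
                abs_add_le _ _
            _ = |2*(m:ℝ) + c| + |2*(m₀:ℝ) + c| := by rw [abs_neg]
        have h4 : |2*((m:ℝ) - (m₀:ℝ))| = 2*|(((m - m₀:ℤ)):ℝ)| := by
          rw [abs_mul]
          push_cast
          norm_num
        have h5 : |2*(m₀:ℝ) + c| ≤ 1 := abs_le.mpr ⟨by linarith [hm₀1.1], hm₀1.2⟩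
        rw [h4] at h3
        linarith
      rw [max_le_iff]
      exact ⟨le_max_left _ _, le_max_of_le_right h2⟩
  calc ∑ m ∈ Finset.Icc A B, DD (2*(m:ℝ) + c)
      ≤ ∑ m ∈ Finset.Icc A B, DD (((m - m₀:ℤ)):ℝ) := Finset.sum_le_sum (fun m _ => key m)
    _ = ∑ n ∈ Finset.Icc (A - m₀) (B - m₀), DD ((n:ℤ):ℝ) := by
        apply Finset.sum_nbij' (fun m => m - m₀) (fun n => n + m₀)
        · intro n hn; simp only [Finset.mem_Icc] at *; omega
        · intro n hn; simp only [Finset.mem_Icc] at *; omega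
        · intro n _; ring
        · intro n _; ring
        · intro n _; rfl
    _ ≤ 1 + 2 * hsum (B - m₀ - (A - m₀) + 1).toNat := sum_DD_int _ _
    _ = 1 + 2 * hsum (B - A + 1).toNat := by
        have e : B - m₀ - (A - m₀) + 1 = B - A + 1 := by ring
        rw [e]

/-- logs to powers -/
lemma log_le_rpow {κ : ℝ} (hκ : 0 < κ) : ∀ x : ℝ, 1 ≤ x → 1 + Real.log x ≤ (1 + κ⁻¹) * x ^ κ := by
  intro x hx
  have hx0 : 0 < x := by linarith
  have h1 : Real.log x ≤ κ⁻¹ * x ^ κ := by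
    have h2 : Real.log (x ^ κ) ≤ x ^ κ - 1 := Real.log_le_sub_one_of_pos (Real.rpow_pos_of_pos hx0 κ)
    rw [Real.log_rpow hx0] at h2
    have h3 : κ * Real.log x ≤ x ^ κ - 1 := h2
    have h4 : Real.log x ≤ (x ^ κ - 1) / κ := by
      rw [le_div_iff₀ hκ]; linarith [mul_comm κ (Real.log x)]
    calc Real.log x ≤ (x ^ κ - 1)/κ := h4
      _ ≤ κ⁻¹ * x ^ κ := by
          rw [div_eq_inv_mul]
          have : (0:ℝ) < κ⁻¹ := by positivity
          nlinarith [Real.rpow_pos_of_pos hx0 κ]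
  have h5 : (1:ℝ) ≤ x ^ κ := Real.one_le_rpow hx (le_of_lt hκ)
  nlinarith


/-- counting solutions of a*x+b*y = t in a box, case |a| ≤ |b| -/
lemma lineCount_aux (T : ℕ) (a b t : ℤ) (ha : a ≠ 0) (hb : b ≠ 0) :
    (((Finset.Icc (-(T:ℤ)) T ×ˢ Finset.Icc (-(T:ℤ)) T).filter
        (fun p => a*p.1 + b*p.2 = t)).card : ℕ)
      ≤ 2 * ((2*T*Int.gcd a b) / b.natAbs) + 1 := by
  classical
  set s := ((Finset.Icc (-(T:ℤ)) T ×ˢ Finset.Icc (-(T:ℤ)) T).filter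
        (fun p => a*p.1 + b*p.2 = t)) with hs
  rcases s.eq_empty_or_nonempty with h | ⟨p₀, hp₀⟩
  · rw [h]; simp
  have hg : 0 < Int.gcd a b := Int.gcd_pos_iff.mpr (Or.inl ha)
  set g : ℕ := Int.gcd a b with hgdef
  have hga : (g:ℤ) ∣ a := Int.gcd_dvd_left a b
  have hgb : (g:ℤ) ∣ b := Int.gcd_dvd_right a b
  have hgz : (g:ℤ) ≠ 0 := by exact_mod_cast hg.ne'
  set D : ℤ := b / (g:ℤ) with hD
  have hDmul : D * (g:ℤ) = b := Int.ediv_mul_cancel hgb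
  have hDz : D ≠ 0 := by
    intro h0; rw [h0, zero_mul] at hDmul; exact hb hDmul.symm
  have hp₀' := Finset.mem_filter.mp hp₀
  have heq₀ : a*p₀.1 + b*p₀.2 = t := hp₀'.2
  -- divisibility
  have hdvd : ∀ p ∈ s, D ∣ (p.1 - p₀.1) := by
    intro p hp
    have hp' := Finset.mem_filter.mp hp
    have heq : a*p.1 + b*p.2 = t := hp'.2
    have hkey : a * (p.1 - p₀.1) = b * (p₀.2 - p.2) := by linarith
    have hcop : Int.gcd (a / (g:ℤ)) (b / (g:ℤ)) = 1 := Int.gcd_div_gcd_div_gcd hg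
    have hamul : (a / (g:ℤ)) * (g:ℤ) = a := Int.ediv_mul_cancel hga
    have hkey2 : (a/(g:ℤ)) * (p.1 - p₀.1) = D * (p₀.2 - p.2) := by
      apply mul_left_cancel₀ hgz
      calc (g:ℤ) * ((a/(g:ℤ)) * (p.1 - p₀.1)) = a * (p.1 - p₀.1) := by
            rw [← mul_assoc, mul_comm (g:ℤ) (a/(g:ℤ)), hamul]
        _ = b * (p₀.2 - p.2) := hkey
        _ = (g:ℤ) * (D * (p₀.2 - p.2)) := by rw [← mul_assoc, mul_comm (g:ℤ) D, hDmul]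
    have hdd : D ∣ (a/(g:ℤ)) * (p.1 - p₀.1) := ⟨p₀.2 - p.2, hkey2⟩
    have hcop' : Int.gcd D (a/(g:ℤ)) = 1 := by
      rw [Int.gcd_comm]; exact hcop
    exact (Int.isCoprime_iff_gcd_eq_one.mpr hcop').dvd_of_dvd_mul_left hdd
  -- injection
  set M : ℕ := (2*T*g) / b.natAbs with hM
  have hcard : s.card ≤ (Finset.Icc (-(M:ℤ)) M).card := by
    apply Finset.card_le_card_of_injOn (fun p => (p.1 - p₀.1) / D)
    · intro p hp
      have hp' := Finset.mem_filter.mp hp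
      have hmem := Finset.mem_product.mp hp'.1
      have h1 := Finset.mem_Icc.mp hmem.1
      have h01 := Finset.mem_Icc.mp (Finset.mem_product.mp hp₀'.1).1
      have habs : (p.1 - p₀.1).natAbs ≤ 2*T := by
        have : -(2*(T:ℤ)) ≤ p.1 - p₀.1 ∧ p.1 - p₀.1 ≤ 2*T := by omega
        omega
      have hqD : ((p.1 - p₀.1) / D) * D = p.1 - p₀.1 := Int.ediv_mul_cancel (hdvd p hp)
      have hnat : ((p.1 - p₀.1) / D).natAbs * D.natAbs = (p.1 - p₀.1).natAbs := by
        rw [← Int.natAbs_mul, hqD]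
      have hDg : D.natAbs * g = b.natAbs := by
        have := congrArg Int.natAbs hDmul
        rwa [Int.natAbs_mul, Int.natAbs_natCast] at this
      have hq : ((p.1 - p₀.1) / D).natAbs ≤ M := by
        rw [hM]
        rw [Nat.le_div_iff_mul_le (by positivity : 0 < b.natAbs)]
        calc ((p.1 - p₀.1) / D).natAbs * b.natAbs
            = ((p.1 - p₀.1) / D).natAbs * (D.natAbs * g) := by rw [hDg]
          _ = (((p.1 - p₀.1) / D).natAbs * D.natAbs) * g := by ring
          _ = (p.1 - p₀.1).natAbs * g := by rw [hnat]
          _ ≤ (2*T) * g := Nat.mul_le_mul_right _ habs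
          _ = 2*T*g := by ring
      simp only [Finset.coe_Icc, Set.mem_Icc]
      omega
    · intro p hp q hq hpq
      have hp' := Finset.mem_filter.mp hp
      have hq' := Finset.mem_filter.mp hq
      have h1 : p.1 = q.1 := by
        have e1 : ((p.1 - p₀.1) / D) * D = p.1 - p₀.1 := Int.ediv_mul_cancel (hdvd p hp)
        have e2 : ((q.1 - p₀.1) / D) * D = q.1 - p₀.1 := Int.ediv_mul_cancel (hdvd q hq)
        have hpq' : (p.1 - p₀.1)/D = (q.1 - p₀.1)/D := hpq
        have : p.1 - p₀.1 = q.1 - p₀.1 := by rw [← e1, ← e2, hpq']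
        omega
      have h2 : p.2 = q.2 := by
        have := hp'.2
        have := hq'.2
        have hb2 : b * p.2 = b * q.2 := by
          have e1 : a*p.1 + b*p.2 = t := hp'.2
          have e2 : a*q.1 + b*q.2 = t := hq'.2
          rw [h1] at e1
          linarith
        exact mul_left_cancel₀ hb hb2
      exact Prod.ext h1 h2
  calc s.card ≤ (Finset.Icc (-(M:ℤ)) M).card := hcard
    _ = 2*M + 1 := by rw [Int.card_Icc]; omega

/-- counting solutions, symmetric form -/
lemma lineCount (T : ℕ) (a b t : ℤ) (ha : a ≠ 0) (hb : b ≠ 0) :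
    (((Finset.Icc (-(T:ℤ)) T ×ˢ Finset.Icc (-(T:ℤ)) T).filter
        (fun p => a*p.1 + b*p.2 = t)).card : ℕ)
      ≤ 2 * ((2*T*Int.gcd a b) / (max a.natAbs b.natAbs)) + 1 := by
  rcases le_total a.natAbs b.natAbs with hab | hab
  · rw [max_eq_right hab]; exact lineCount_aux T a b t ha hb
  · rw [max_eq_left hab]
    have hswap : (((Finset.Icc (-(T:ℤ)) T ×ˢ Finset.Icc (-(T:ℤ)) T).filter
        (fun p => a*p.1 + b*p.2 = t)).card)
        = (((Finset.Icc (-(T:ℤ)) T ×ˢ Finset.Icc (-(T:ℤ)) T).filter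
        (fun p => b*p.1 + a*p.2 = t)).card) := by
      apply Finset.card_nbij (fun p => p.swap)
      · intro p hp
        have hp' := Finset.mem_filter.mp hp
        have hmem := Finset.mem_product.mp hp'.1
        apply Finset.mem_filter.mpr
        refine ⟨Finset.mem_product.mpr ⟨hmem.2, hmem.1⟩, ?_⟩
        simp only [Prod.swap]
        linarith [hp'.2]
      · intro p hp q hq hpq
        exact Prod.swap_injective hpq
      · intro p hp
        refine ⟨p.swap, ?_, by simp⟩
        have hp' := Finset.mem_filter.mp hp
        have hmem := Finset.mem_product.mp hp'.1
        apply Finset.mem_filter.mpr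
        refine ⟨Finset.mem_product.mpr ⟨hmem.2, hmem.1⟩, ?_⟩
        simp only [Prod.swap]
        linarith [hp'.2]
    rw [hswap]
    have := lineCount_aux T b a t hb ha
    rwa [Int.gcd_comm b a] at this

section Pins
variable {d T : ℕ}

lemma card_pin1 (i : Fin d) :
    (Finset.Icc (Function.update (fun _ => -(T:ℤ)) i 0) (Function.update (fun _ => (T:ℤ)) i 0)).card
      = (2*T+1)^(d-1) := by
  rw [Pi.card_Icc]
  rw [Finset.prod_eq_prod_diff_singleton_mul (Finset.mem_univ i)]
  simp only [Function.update_self]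
  have h1 : ∀ k ∈ Finset.univ \ {i},
      (Finset.Icc (Function.update (fun _ => -(T:ℤ)) i 0 k) (Function.update (fun _ => (T:ℤ)) i 0 k)).card
      = 2*T+1 := by
    intro k hk
    have hki : k ≠ i := by simpa using (Finset.mem_sdiff.mp hk).2
    rw [Function.update_of_ne hki, Function.update_of_ne hki, Int.card_Icc]
    omega
  rw [Finset.prod_congr rfl h1, Finset.prod_const]
  have h2 : (Finset.univ \ {i}).card = d - 1 := by
    rw [Finset.card_sdiff_of_subset (by simp), Finset.card_univ, Fintype.card_fin, Finset.card_singleton]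
  rw [h2]
  simp [Int.card_Icc]

lemma mem_pin1 {u : Fin d → ℤ} (hu : u ∈ Box d T) (i : Fin d) :
    Function.update u i 0 ∈
      Finset.Icc (Function.update (fun _ => -(T:ℤ)) i 0) (Function.update (fun _ => (T:ℤ)) i 0) := by
  rw [Finset.mem_Icc]
  refine ⟨fun k => ?_, fun k => ?_⟩ <;>
  · by_cases hk : k = i
    · subst hk; simp
    · simp [Function.update_of_ne hk, (mem_Box.mp hu k).1, (mem_Box.mp hu k).2]

lemma card_pin2 {i j : Fin d} (hij : i ≠ j) :
    (Finset.Icc (Function.update (Function.update (fun _ => -(T:ℤ)) i 0) j 0)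
      (Function.update (Function.update (fun _ => (T:ℤ)) i 0) j 0)).card
      = (2*T+1)^(d-2) := by
  rw [Pi.card_Icc]
  have key : ∀ k : Fin d,
      (Finset.Icc (Function.update (Function.update (fun _ => -(T:ℤ)) i 0) j 0 k)
        (Function.update (Function.update (fun _ => (T:ℤ)) i 0) j 0 k)).card
      = if k = i ∨ k = j then 1 else 2*T+1 := by
    intro k
    by_cases hkj : k = j
    · subst hkj
      simp [Int.card_Icc]
    · by_cases hki : k = i
      · subst hki
        rw [Function.update_of_ne hkj, Function.update_of_ne hkj, Function.update_self,
          Function.update_self]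
        simp [hkj, Int.card_Icc]
      · rw [Function.update_of_ne hkj, Function.update_of_ne hkj, Function.update_of_ne hki,
          Function.update_of_ne hki]
        simp [hki, hkj, Int.card_Icc]
        omega
  rw [Finset.prod_congr rfl (fun k _ => key k)]
  rw [Finset.prod_ite]
  rw [Finset.prod_const, Finset.prod_const]
  have hc1 : (Finset.filter (fun k => k = i ∨ k = j) Finset.univ).card = 2 := by
    have : (Finset.filter (fun k => k = i ∨ k = j) Finset.univ) = {i, j} := by
      ext k; simp
    rw [this, Finset.card_insert_of_notMem (by simpa using hij), Finset.card_singleton]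
  have hc2 : (Finset.filter (fun k => ¬(k = i ∨ k = j)) Finset.univ).card = d - 2 := by
    have := Finset.card_filter_add_card_filter_not
      (s := (Finset.univ : Finset (Fin d))) (p := fun k => k = i ∨ k = j)
    rw [Finset.card_univ, Fintype.card_fin] at this
    omega
  rw [hc1, hc2]
  simp

lemma mem_pin2 {u : Fin d → ℤ} (hu : u ∈ Box d T) (i j : Fin d) :
    Function.update (Function.update u i 0) j 0 ∈
      Finset.Icc (Function.update (Function.update (fun _ => -(T:ℤ)) i 0) j 0)
        (Function.update (Function.update (fun _ => (T:ℤ)) i 0) j 0) := by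
  rw [Finset.mem_Icc]
  refine ⟨fun k => ?_, fun k => ?_⟩ <;>
  · by_cases hkj : k = j
    · subst hkj; simp
    · by_cases hki : k = i
      · subst hki; simp [Function.update_of_ne hkj]
      · simp [Function.update_of_ne hkj, Function.update_of_ne hki,
          (mem_Box.mp hu k).1, (mem_Box.mp hu k).2]

end Pins

section Nfib
variable {d : ℕ}

def Nfib (T : ℕ) (u : Fin d → ℤ) (m : ℤ) : ℕ :=
  ((Box d T).filter (fun w => dotz u w = m)).card

lemma dot_split1 (i : Fin d) (u w : Fin d → ℤ) :
    dotz u w = u i * w i + ∑ k ∈ Finset.univ.erase i, u k * w k := by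
  rw [dotz, ← Finset.add_sum_erase _ _ (Finset.mem_univ i)]

lemma dot_split2 {i j : Fin d} (hij : i ≠ j) (u w : Fin d → ℤ) :
    dotz u w = u i * w i + (u j * w j +
      ∑ k ∈ (Finset.univ.erase i).erase j, u k * w k) := by
  rw [dot_split1 i u w]
  congr 1
  rw [← Finset.add_sum_erase _ _ (Finset.mem_erase.mpr ⟨(Ne.symm hij), Finset.mem_univ j⟩)]

lemma Nfib_le_box (T : ℕ) (u : Fin d → ℤ) (m : ℤ) : Nfib T u m ≤ (2*T+1)^d := by
  rw [← card_Box d T]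
  exact Finset.card_le_card (Finset.filter_subset _ _)

lemma Nfib_le_pin1 (T : ℕ) (u : Fin d → ℤ) (m : ℤ) {i : Fin d} (hi : u i ≠ 0) :
    Nfib T u m ≤ (2*T+1)^(d-1) := by
  rw [← card_pin1 (T := T) i, Nfib]
  apply Finset.card_le_card_of_injOn (fun w => Function.update w i 0)
  · intro w hw
    exact mem_pin1 (Finset.mem_filter.mp hw).1 i
  · intro w hw w' hw' h
    simp only at h
    have hww' : ∀ k, k ≠ i → w k = w' k := by
      intro k hk
      have := congrFun h k
      rwa [Function.update_of_ne hk, Function.update_of_ne hk] at this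
    have hm : dotz u w = dotz u w' := by
      rw [(Finset.mem_filter.mp hw).2, (Finset.mem_filter.mp hw').2]
    rw [dot_split1 i u w, dot_split1 i u w'] at hm
    have htail : ∑ k ∈ Finset.univ.erase i, u k * w k
        = ∑ k ∈ Finset.univ.erase i, u k * w' k := by
      apply Finset.sum_congr rfl
      intro k hk
      rw [hww' k (Finset.ne_of_mem_erase hk)]
    rw [htail] at hm
    have hii : w i = w' i := by
      have := add_right_cancel hm
      exact mul_left_cancel₀ hi this
    funext k
    by_cases hk : k = i
    · subst hk; exact hii
    · exact hww' k hk

lemma Nfib_le_pin2 (T : ℕ) (u : Fin d → ℤ) (m : ℤ) {i j : Fin d} (hij : i ≠ j)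
    (hi : u i ≠ 0) (hj : u j ≠ 0) :
    Nfib T u m ≤ (2 * ((2*T*Int.gcd (u i) (u j)) / (max (u i).natAbs (u j).natAbs)) + 1)
      * (2*T+1)^(d-2) := by
  classical
  set n : ℕ := 2 * ((2*T*Int.gcd (u i) (u j)) / (max (u i).natAbs (u j).natAbs)) + 1 with hn
  set s := (Box d T).filter (fun w => dotz u w = m) with hsdef
  set f : (Fin d → ℤ) → (Fin d → ℤ) := fun w => Function.update (Function.update w i 0) j 0 with hf
  have himg : (s.image f).card ≤ (2*T+1)^(d-2) := by
    rw [← card_pin2 (T := T) hij]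
    apply Finset.card_le_card
    intro z hz
    obtain ⟨w, hw, rfl⟩ := Finset.mem_image.mp hz
    exact mem_pin2 (Finset.mem_filter.mp hw).1 i j
  have hfiber : ∀ z ∈ s.image f, (s.filter (fun w => f w = z)).card ≤ n := by
    intro z hz
    have hcount := lineCount T (u i) (u j) (m - dotz u z) hi hj
    rw [hn]
    refine le_trans ?_ hcount
    apply Finset.card_le_card_of_injOn (fun w => (w i, w j))
    · intro w hw
      have hw1 := Finset.mem_filter.mp hw
      have hw2 := Finset.mem_filter.mp hw1.1
      have hwBox := hw2.1
      have hwdot : dotz u w = m := hw2.2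
      have hwz : f w = z := hw1.2
      apply Finset.mem_filter.mpr
      constructor
      · apply Finset.mem_product.mpr
        constructor <;>
          simp [Finset.mem_Icc, (mem_Box.mp hwBox i).1, (mem_Box.mp hwBox i).2,
            (mem_Box.mp hwBox j).1, (mem_Box.mp hwBox j).2]
      · have hz0 : dotz u z = ∑ k ∈ (Finset.univ.erase i).erase j, u k * w k := by
          rw [← hwz, dot_split2 hij u (f w)]
          have e1 : f w i = 0 := by
            rw [hf]
            simp only
            rw [Function.update_of_ne hij, Function.update_self]
          have e2 : f w j = 0 := by rw [hf]; simp
          rw [e1, e2]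
          have e3 : ∑ k ∈ (Finset.univ.erase i).erase j, u k * f w k
              = ∑ k ∈ (Finset.univ.erase i).erase j, u k * w k := by
            apply Finset.sum_congr rfl
            intro k hk
            have hki : k ≠ i := Finset.ne_of_mem_erase (Finset.mem_of_mem_erase hk)
            have hkj : k ≠ j := Finset.ne_of_mem_erase hk
            rw [hf]
            simp only
            rw [Function.update_of_ne hkj, Function.update_of_ne hki]
          rw [e3]
          ring
        have hsplit : m = u i * w i + (u j * w j
            + ∑ k ∈ (Finset.univ.erase i).erase j, u k * w k) := by
          rw [← hwdot, dot_split2 hij u w]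
        rw [hz0]
        simp only
        linarith
    · intro w hw w' hw' hww
      simp only [Prod.mk.injEq] at hww
      have hz : f w = f w' := by
        rw [(Finset.mem_filter.mp hw).2, (Finset.mem_filter.mp hw').2]
      funext k
      by_cases hki : k = i
      · subst hki; exact hww.1
      · by_cases hkj : k = j
        · subst hkj; exact hww.2
        · have := congrFun hz k
          rw [hf] at this
          simp only at this
          rwa [Function.update_of_ne hkj, Function.update_of_ne hki,
            Function.update_of_ne hkj, Function.update_of_ne hki] at this
  have := Finset.card_le_mul_card_image (f := f) s n hfiber
  calc Nfib T u m = s.card := rfl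
    _ ≤ n * (s.image f).card := this
    _ ≤ n * (2*T+1)^(d-2) := Nat.mul_le_mul_left _ himg

end Nfib

/-- divisor counting: ∑_{b ≤ T} τ(b) ≤ T · H_T -/
lemma tau_sum (T : ℕ) : ∑ b ∈ Finset.Icc 1 T, ((b.divisors.card : ℝ)) ≤ T * hsum T := by
  have e1 : ∀ b ∈ Finset.Icc 1 T, (b.divisors.card : ℝ)
      = ∑ g ∈ Finset.Icc 1 T, (if g ∣ b then (1:ℝ) else 0) := by
    intro b hb
    rw [Finset.mem_Icc] at hb
    rw [Finset.sum_ite, Finset.sum_const_zero, add_zero, Finset.sum_const, nsmul_eq_mul, mul_one]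
    congr 1
    have : b.divisors = Finset.filter (fun g => g ∣ b) (Finset.Icc 1 T) := by
      ext g
      simp only [Nat.mem_divisors, Finset.mem_filter, Finset.mem_Icc]
      constructor
      · rintro ⟨hg, hb0⟩
        refine ⟨⟨Nat.one_le_iff_ne_zero.mpr ?_, le_trans (Nat.le_of_dvd (by omega) hg) hb.2⟩, hg⟩
        rintro rfl
        simp at hg
        omega
      · rintro ⟨_, hg⟩
        exact ⟨hg, by omega⟩
    rw [this]
  rw [Finset.sum_congr rfl e1, Finset.sum_comm]
  have e2 : ∀ g ∈ Finset.Icc 1 T, ∑ b ∈ Finset.Icc 1 T, (if g ∣ b then (1:ℝ) else 0)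
      ≤ T * (g:ℝ)⁻¹ := by
    intro g hg
    rw [Finset.mem_Icc] at hg
    rw [Finset.sum_ite, Finset.sum_const_zero, add_zero, Finset.sum_const, nsmul_eq_mul, mul_one]
    have hIcc : Finset.Icc 1 T = Finset.Ioc 0 T := rfl
    rw [hIcc, Nat.Ioc_filter_dvd_card_eq_div]
    calc ((T / g : ℕ) : ℝ) ≤ (T:ℝ)/(g:ℝ) := Nat.cast_div_le
      _ = T * (g:ℝ)⁻¹ := by ring
  calc ∑ g ∈ Finset.Icc 1 T, ∑ b ∈ Finset.Icc 1 T, (if g ∣ b then (1:ℝ) else 0)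
      ≤ ∑ g ∈ Finset.Icc 1 T, (T:ℝ) * (g:ℝ)⁻¹ := Finset.sum_le_sum e2
    _ = T * hsum T := by rw [hsum, Finset.mul_sum]

/-- ∑_{a=1}^b gcd(a,b) ≤ b·τ(b) -/
lemma gcd_line (b : ℕ) (hb : 1 ≤ b) :
    ∑ a ∈ Finset.Icc 1 b, ((Nat.gcd a b : ℝ)) ≤ (b:ℝ) * b.divisors.card := by
  have key : ∀ a ∈ Finset.Icc 1 b, (Nat.gcd a b : ℝ)
      ≤ ∑ g ∈ b.divisors, (if g ∣ a then (g:ℝ) else 0) := by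
    intro a ha
    rw [Finset.mem_Icc] at ha
    have hmem : Nat.gcd a b ∈ b.divisors :=
      Nat.mem_divisors.mpr ⟨Nat.gcd_dvd_right a b, by omega⟩
    have := Finset.single_le_sum (f := fun g => if g ∣ a then (g:ℝ) else 0)
      (fun g _ => by positivity) hmem
    rwa [if_pos (Nat.gcd_dvd_left a b)] at this
  calc ∑ a ∈ Finset.Icc 1 b, ((Nat.gcd a b : ℝ))
      ≤ ∑ a ∈ Finset.Icc 1 b, ∑ g ∈ b.divisors, (if g ∣ a then (g:ℝ) else 0) :=
        Finset.sum_le_sum key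
    _ = ∑ g ∈ b.divisors, ∑ a ∈ Finset.Icc 1 b, (if g ∣ a then (g:ℝ) else 0) := Finset.sum_comm
    _ ≤ ∑ g ∈ b.divisors, (b:ℝ) := by
        apply Finset.sum_le_sum
        intro g hg
        have hg' := Nat.mem_divisors.mp hg
        have hg1 : 1 ≤ g := Nat.one_le_iff_ne_zero.mpr (by
          rintro rfl; simp at hg')
        rw [Finset.sum_ite, Finset.sum_const_zero, add_zero, Finset.sum_const, nsmul_eq_mul]
        have hIcc : Finset.Icc 1 b = Finset.Ioc 0 b := rfl
        rw [hIcc, Nat.Ioc_filter_dvd_card_eq_div]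
        calc ((b / g : ℕ) : ℝ) * g = ((b/g) * g : ℕ) := by push_cast; ring
          _ ≤ (b:ℝ) := by exact_mod_cast Nat.div_mul_le_self b g
    _ = (b:ℝ) * b.divisors.card := by rw [Finset.sum_const, nsmul_eq_mul, mul_comm]

/-- the natural-number gcd/max sum -/
lemma gcd_sum_nat (T : ℕ) :
    ∑ p ∈ Finset.Icc 1 T ×ˢ Finset.Icc 1 T, ((Nat.gcd p.1 p.2 : ℝ)) / (max p.1 p.2 : ℕ)
      ≤ 2 * T * hsum T := by
  have hpt : ∀ p ∈ Finset.Icc 1 T ×ˢ Finset.Icc 1 T,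
      ((Nat.gcd p.1 p.2 : ℝ)) / (max p.1 p.2 : ℕ)
      ≤ (if p.1 ≤ p.2 then ((Nat.gcd p.1 p.2 : ℝ))/(p.2:ℝ) else 0)
        + (if p.2 ≤ p.1 then ((Nat.gcd p.1 p.2 : ℝ))/(p.1:ℝ) else 0) := by
    intro p hp
    have hp' := Finset.mem_product.mp hp
    have h1 := Finset.mem_Icc.mp hp'.1
    have h2 := Finset.mem_Icc.mp hp'.2
    rcases le_total p.1 p.2 with h | h
    · rw [if_pos h, max_eq_right h]
      have : (0:ℝ) ≤ (if p.2 ≤ p.1 then ((Nat.gcd p.1 p.2 : ℝ))/(p.1:ℝ) else 0) := by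
        split <;> positivity
      linarith
    · rw [if_pos h, max_eq_left h]
      have : (0:ℝ) ≤ (if p.1 ≤ p.2 then ((Nat.gcd p.1 p.2 : ℝ))/(p.2:ℝ) else 0) := by
        split <;> positivity
      linarith
  have step1 : ∑ p ∈ Finset.Icc 1 T ×ˢ Finset.Icc 1 T,
      (if p.1 ≤ p.2 then ((Nat.gcd p.1 p.2 : ℝ))/(p.2:ℝ) else 0) ≤ T * hsum T := by
    rw [Finset.sum_product]
    rw [Finset.sum_comm]
    have inner : ∀ b ∈ Finset.Icc 1 T,
        ∑ a ∈ Finset.Icc 1 T, (if a ≤ b then ((Nat.gcd a b : ℝ))/(b:ℝ) else 0)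
        ≤ (b.divisors.card : ℝ) := by
      intro b hb
      have hb' := Finset.mem_Icc.mp hb
      rw [Finset.sum_ite, Finset.sum_const_zero, add_zero]
      have hfil : Finset.filter (fun a => a ≤ b) (Finset.Icc 1 T) = Finset.Icc 1 b := by
        ext a; simp only [Finset.mem_filter, Finset.mem_Icc]; omega
      rw [hfil, ← Finset.sum_div]
      rw [div_le_iff₀ (by exact_mod_cast hb'.1 : (0:ℝ) < b)]
      calc ∑ a ∈ Finset.Icc 1 b, ((Nat.gcd a b : ℝ)) ≤ (b:ℝ) * b.divisors.card :=
            gcd_line b hb'.1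
        _ = (b.divisors.card:ℝ) * b := by ring
    calc ∑ b ∈ Finset.Icc 1 T, ∑ a ∈ Finset.Icc 1 T, (if a ≤ b then ((Nat.gcd a b : ℝ))/(b:ℝ) else 0)
        ≤ ∑ b ∈ Finset.Icc 1 T, (b.divisors.card : ℝ) := Finset.sum_le_sum inner
      _ ≤ T * hsum T := tau_sum T
  have step2 : ∑ p ∈ Finset.Icc 1 T ×ˢ Finset.Icc 1 T,
      (if p.2 ≤ p.1 then ((Nat.gcd p.1 p.2 : ℝ))/(p.1:ℝ) else 0) ≤ T * hsum T := by
    rw [Finset.sum_product]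
    have inner : ∀ a ∈ Finset.Icc 1 T,
        ∑ b ∈ Finset.Icc 1 T, (if b ≤ a then ((Nat.gcd a b : ℝ))/(a:ℝ) else 0)
        ≤ (a.divisors.card : ℝ) := by
      intro a ha
      have ha' := Finset.mem_Icc.mp ha
      rw [Finset.sum_ite, Finset.sum_const_zero, add_zero]
      have hfil : Finset.filter (fun b => b ≤ a) (Finset.Icc 1 T) = Finset.Icc 1 a := by
        ext b; simp only [Finset.mem_filter, Finset.mem_Icc]; omega
      rw [hfil, ← Finset.sum_div]
      rw [div_le_iff₀ (by exact_mod_cast ha'.1 : (0:ℝ) < a)]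
      have e : ∑ b ∈ Finset.Icc 1 a, ((Nat.gcd a b : ℝ)) = ∑ b ∈ Finset.Icc 1 a, ((Nat.gcd b a : ℝ)) := by
        apply Finset.sum_congr rfl
        intro b _
        rw [Nat.gcd_comm]
      rw [e]
      calc ∑ b ∈ Finset.Icc 1 a, ((Nat.gcd b a : ℝ)) ≤ (a:ℝ) * a.divisors.card :=
            gcd_line a ha'.1
        _ = (a.divisors.card:ℝ) * a := by ring
    calc ∑ a ∈ Finset.Icc 1 T, ∑ b ∈ Finset.Icc 1 T, (if b ≤ a then ((Nat.gcd a b : ℝ))/(a:ℝ) else 0)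
        ≤ ∑ a ∈ Finset.Icc 1 T, (a.divisors.card : ℝ) := Finset.sum_le_sum inner
      _ ≤ T * hsum T := tau_sum T
  calc ∑ p ∈ Finset.Icc 1 T ×ˢ Finset.Icc 1 T, ((Nat.gcd p.1 p.2 : ℝ)) / (max p.1 p.2 : ℕ)
      ≤ ∑ p ∈ Finset.Icc 1 T ×ˢ Finset.Icc 1 T,
        ((if p.1 ≤ p.2 then ((Nat.gcd p.1 p.2 : ℝ))/(p.2:ℝ) else 0)
        + (if p.2 ≤ p.1 then ((Nat.gcd p.1 p.2 : ℝ))/(p.1:ℝ) else 0)) := Finset.sum_le_sum hpt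
    _ = _ + _ := Finset.sum_add_distrib
    _ ≤ T * hsum T + T * hsum T := add_le_add step1 step2
    _ = 2 * T * hsum T := by ring

section GI
/-- gcd over max ratio for integers -/
def ratio (a b : ℤ) : ℝ := (Int.gcd a b : ℝ) / ((max a.natAbs b.natAbs : ℕ) : ℝ)

lemma ratio_nonneg (a b : ℤ) : 0 ≤ ratio a b := by unfold ratio; positivity

lemma gcd_sum_int (T : ℕ) :
    ∑ p ∈ Finset.Icc (-(T:ℤ)) T ×ˢ Finset.Icc (-(T:ℤ)) T,
      (if p.1 ≠ 0 then ratio p.1 p.2 else 0)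
    ≤ 8 * T * hsum T + (2*T+1) := by
  classical
  set A := Finset.Icc (-(T:ℤ)) T with hA
  have hpt : ∀ p ∈ A ×ˢ A, (if p.1 ≠ 0 then ratio p.1 p.2 else 0)
      ≤ (if p.1 ≠ 0 ∧ p.2 ≠ 0 then ratio p.1 p.2 else 0)
        + (if p.1 ≠ 0 ∧ p.2 = 0 then (1:ℝ) else 0) := by
    intro p _
    by_cases h1 : p.1 = 0
    · simp [h1]
    · by_cases h2 : p.2 = 0
      · rw [if_pos h1, if_neg (by tauto), if_pos ⟨h1, h2⟩]
        have : ratio p.1 p.2 = 1 := by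
          unfold ratio
          rw [h2]
          rw [Int.gcd_zero_right]
          have : p.1.natAbs ≠ 0 := Int.natAbs_ne_zero.mpr h1
          simp only [Int.natAbs_zero, max_eq_left (Nat.zero_le _)]
          rw [div_self (by exact_mod_cast this)]
        rw [this]
        norm_num
      · rw [if_pos h1, if_pos ⟨h1, h2⟩, if_neg (by tauto)]
        linarith [ratio_nonneg p.1 p.2]
  have step2 : ∑ p ∈ A ×ˢ A, (if p.1 ≠ 0 ∧ p.2 = 0 then (1:ℝ) else 0) ≤ 2*T+1 := by
    rw [Finset.sum_ite, Finset.sum_const_zero, add_zero, Finset.sum_const, nsmul_eq_mul, mul_one]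
    have hsub : (A ×ˢ A).filter (fun p => p.1 ≠ 0 ∧ p.2 = 0) ⊆ A ×ˢ ({0} : Finset ℤ) := by
      intro p hp
      have hp' := Finset.mem_filter.mp hp
      have hmem := Finset.mem_product.mp hp'.1
      exact Finset.mem_product.mpr ⟨hmem.1, by simp [hp'.2.2]⟩
    calc ((((A ×ˢ A).filter (fun p => p.1 ≠ 0 ∧ p.2 = 0)).card : ℝ))
        ≤ ((A ×ˢ ({0} : Finset ℤ)).card : ℝ) := by
          exact_mod_cast Finset.card_le_card hsub
      _ = ((A.card : ℝ)) := by rw [Finset.card_product]; simp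
      _ ≤ 2*T+1 := by
          have hc : A.card = 2*T+1 := by rw [hA, Int.card_Icc]; omega
          rw [hc]; push_cast; norm_num
  have step1 : ∑ p ∈ A ×ˢ A, (if p.1 ≠ 0 ∧ p.2 ≠ 0 then ratio p.1 p.2 else 0)
      ≤ 8 * T * hsum T := by
    set F : ℤ × ℤ → ℝ := fun p => if p.1 ≠ 0 ∧ p.2 ≠ 0 then ratio p.1 p.2 else 0 with hF
    set ψ : ℤ × ℤ → ℕ × ℕ := fun p => (p.1.natAbs, p.2.natAbs) with hψ
    set t := Finset.Icc 1 T ×ˢ Finset.Icc 1 T with ht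
    have hfib := Finset.sum_fiberwise_eq_sum_filter (A ×ˢ A) t ψ F
    have hsupp : ∑ p ∈ (A ×ˢ A).filter (fun p => ψ p ∈ t), F p = ∑ p ∈ A ×ˢ A, F p := by
      rw [← Finset.sum_filter_add_sum_filter_not (A ×ˢ A) (fun p => ψ p ∈ t) F]
      have : ∑ p ∈ (A ×ˢ A).filter (fun p => ¬ (ψ p ∈ t)), F p = 0 := by
        apply Finset.sum_eq_zero
        intro p hp
        have hp' := Finset.mem_filter.mp hp
        have hmem := Finset.mem_product.mp hp'.1
        have h1 := Finset.mem_Icc.mp hmem.1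
        have h2 := Finset.mem_Icc.mp hmem.2
        have : p.1 = 0 ∨ p.2 = 0 := by
          by_contra hcon
          push_neg at hcon
          apply hp'.2
          rw [ht, hψ]
          simp only
          apply Finset.mem_product.mpr
          refine ⟨Finset.mem_Icc.mpr ⟨?_, ?_⟩, Finset.mem_Icc.mpr ⟨?_, ?_⟩⟩ <;> omega
        rw [hF]
        simp only
        rw [if_neg (by tauto)]
      linarith
    rw [← hsupp, ← hfib]
    have hq : ∀ q ∈ t, ∑ p ∈ (A ×ˢ A).filter (fun p => ψ p = q), F p
        ≤ 4 * ((Nat.gcd q.1 q.2 : ℝ) / (max q.1 q.2 : ℕ)) := by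
      intro q hq
      have hq' := Finset.mem_product.mp hq
      have hq1 := Finset.mem_Icc.mp hq'.1
      have hq2 := Finset.mem_Icc.mp hq'.2
      have hval : ∀ p ∈ (A ×ˢ A).filter (fun p => ψ p = q),
          F p = (Nat.gcd q.1 q.2 : ℝ) / (max q.1 q.2 : ℕ) := by
        intro p hp
        have hp' := Finset.mem_filter.mp hp
        have hψp : p.1.natAbs = q.1 ∧ p.2.natAbs = q.2 := by
          have := hp'.2
          rw [hψ] at this
          exact ⟨congrArg Prod.fst this, congrArg Prod.snd this⟩
        have hp1 : p.1 ≠ 0 := by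
          intro h0; rw [h0] at hψp; simp at hψp; omega
        have hp2 : p.2 ≠ 0 := by
          intro h0; rw [h0] at hψp; simp at hψp; omega
        rw [hF]
        simp only
        rw [if_pos ⟨hp1, hp2⟩]
        unfold ratio
        rw [Int.gcd]
        rw [hψp.1, hψp.2]
      rw [Finset.sum_congr rfl hval, Finset.sum_const, nsmul_eq_mul]
      have hcard : (((A ×ˢ A).filter (fun p => ψ p = q)).card : ℝ) ≤ 4 := by
        have hsub : ((A ×ˢ A).filter (fun p => ψ p = q)) ⊆
            ({(q.1:ℤ), -(q.1:ℤ)} : Finset ℤ) ×ˢ ({(q.2:ℤ), -(q.2:ℤ)} : Finset ℤ) := by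
          intro p hp
          have hp' := Finset.mem_filter.mp hp
          have hψp : p.1.natAbs = q.1 ∧ p.2.natAbs = q.2 := by
            have := hp'.2
            rw [hψ] at this
            exact ⟨congrArg Prod.fst this, congrArg Prod.snd this⟩
          apply Finset.mem_product.mpr
          constructor
          · rcases Int.natAbs_eq_iff.mp hψp.1 with h | h <;> simp [h]
          · rcases Int.natAbs_eq_iff.mp hψp.2 with h | h <;> simp [h]
        calc (((A ×ˢ A).filter (fun p => ψ p = q)).card : ℝ)
            ≤ ((({(q.1:ℤ), -(q.1:ℤ)} : Finset ℤ) ×ˢ ({(q.2:ℤ), -(q.2:ℤ)} : Finset ℤ)).card : ℝ) := by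
              exact_mod_cast Finset.card_le_card hsub
          _ ≤ 4 := by
              rw [Finset.card_product]
              have c1 : ({(q.1:ℤ), -(q.1:ℤ)} : Finset ℤ).card ≤ 2 :=
                le_trans (Finset.card_insert_le _ _) (by simp)
              have c2 : ({(q.2:ℤ), -(q.2:ℤ)} : Finset ℤ).card ≤ 2 :=
                le_trans (Finset.card_insert_le _ _) (by simp)
              exact_mod_cast Nat.mul_le_mul c1 c2
      have hpos : (0:ℝ) ≤ (Nat.gcd q.1 q.2 : ℝ) / (max q.1 q.2 : ℕ) := by positivity
      exact mul_le_mul_of_nonneg_right hcard hpos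
    calc ∑ q ∈ t, ∑ p ∈ (A ×ˢ A).filter (fun p => ψ p = q), F p
        ≤ ∑ q ∈ t, 4 * ((Nat.gcd q.1 q.2 : ℝ) / (max q.1 q.2 : ℕ)) := Finset.sum_le_sum hq
      _ = 4 * ∑ q ∈ t, ((Nat.gcd q.1 q.2 : ℝ) / (max q.1 q.2 : ℕ)) := by rw [Finset.mul_sum]
      _ ≤ 4 * (2 * T * hsum T) := by
          apply mul_le_mul_of_nonneg_left _ (by norm_num)
          exact gcd_sum_nat T
      _ = 8 * T * hsum T := by ring
  calc ∑ p ∈ A ×ˢ A, (if p.1 ≠ 0 then ratio p.1 p.2 else 0)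
      ≤ ∑ p ∈ A ×ˢ A, ((if p.1 ≠ 0 ∧ p.2 ≠ 0 then ratio p.1 p.2 else 0)
        + (if p.1 ≠ 0 ∧ p.2 = 0 then (1:ℝ) else 0)) := Finset.sum_le_sum hpt
    _ = _ + _ := Finset.sum_add_distrib
    _ ≤ 8 * T * hsum T + (2*T+1) := add_le_add step1 step2

end GI

section MsSection
variable {d : ℕ}

lemma card_coordfiber {T : ℕ} {i j : Fin d} (hij : i ≠ j) (p : ℤ × ℤ) :
    ((Box d T).filter (fun u => (u i, u j) = p)).card ≤ (2*T+1)^(d-2) := by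
  rw [← card_pin2 (T := T) hij]
  apply Finset.card_le_card_of_injOn (fun u => Function.update (Function.update u i 0) j 0)
  · intro u hu
    exact mem_pin2 (Finset.mem_filter.mp hu).1 i j
  · intro u hu u' hu' h
    simp only at h
    have h1 := (Finset.mem_filter.mp hu).2
    have h2 := (Finset.mem_filter.mp hu').2
    have e1 : u i = p.1 := congrArg Prod.fst h1
    have e2 : u j = p.2 := congrArg Prod.snd h1
    have e3 : u' i = p.1 := congrArg Prod.fst h2
    have e4 : u' j = p.2 := congrArg Prod.snd h2
    funext k
    by_cases hki : k = i
    · subst hki; rw [e1, e3]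
    · by_cases hkj : k = j
      · subst hkj; rw [e2, e4]
      · have := congrFun h k
        rwa [Function.update_of_ne hkj, Function.update_of_ne hki,
          Function.update_of_ne hkj, Function.update_of_ne hki] at this

lemma sum_two_coords {T : ℕ} {i j : Fin d} (hij : i ≠ j) (H : ℤ × ℤ → ℝ)
    (hH : ∀ p, 0 ≤ H p) :
    ∑ u ∈ Box d T, H (u i, u j)
      ≤ ((2*T+1)^(d-2) : ℕ) * ∑ p ∈ Finset.Icc (-(T:ℤ)) T ×ˢ Finset.Icc (-(T:ℤ)) T, H p := by
  classical
  set t := Finset.Icc (-(T:ℤ)) T ×ˢ Finset.Icc (-(T:ℤ)) T with ht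
  have hfib := Finset.sum_fiberwise_eq_sum_filter (Box d T) t
    (fun u => (u i, u j)) (fun u => H (u i, u j))
  have hfil : (Box d T).filter (fun u => (u i, u j) ∈ t) = Box d T := by
    apply Finset.filter_true_of_mem
    intro u hu
    rw [ht]
    apply Finset.mem_product.mpr
    constructor <;> rw [Finset.mem_Icc] <;>
      exact ⟨(mem_Box.mp hu _).1, (mem_Box.mp hu _).2⟩
  rw [hfil] at hfib
  rw [← hfib, Finset.mul_sum]
  apply Finset.sum_le_sum
  intro q hq
  have hval : ∀ u ∈ (Box d T).filter (fun u => (u i, u j) = q), H (u i, u j) = H q := by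
    intro u hu
    rw [(Finset.mem_filter.mp hu).2]
  rw [Finset.sum_congr rfl hval, Finset.sum_const, nsmul_eq_mul]
  apply mul_le_mul_of_nonneg_right _ (hH q)
  exact_mod_cast card_coordfiber hij q

def Ms (T : ℕ) (u : Fin d → ℤ) : ℕ :=
  Finset.sup (Finset.Icc (-((d*T*T : ℕ):ℤ)) ((d*T*T : ℕ):ℤ)) (fun m => Nfib T u m)

lemma Ms_le {T : ℕ} {u : Fin d → ℤ} {K : ℕ} (h : ∀ m, Nfib T u m ≤ K) : Ms T u ≤ K :=
  Finset.sup_le (fun m _ => h m)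

lemma two_le_of_ne {i j : Fin d} (hij : i ≠ j) : 2 ≤ d := by
  have h := Fintype.one_lt_card_iff.mpr ⟨i, j, hij⟩
  rwa [Fintype.card_fin] at h

lemma MsBound {T : ℕ} {u : Fin d → ℤ} {i j : Fin d} (hij : i ≠ j) (hi : u i ≠ 0) :
    Ms T u ≤ (2 * ((2*T*Int.gcd (u i) (u j)) / (max (u i).natAbs (u j).natAbs)) + 1)
      * (2*T+1)^(d-2) := by
  have hd : 2 ≤ d := two_le_of_ne hij
  by_cases hj : u j = 0
  · apply Ms_le
    intro m
    have h1 : Nfib T u m ≤ (2*T+1)^(d-1) := Nfib_le_pin1 T u m hi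
    have hgcd : Int.gcd (u i) (u j) = (u i).natAbs := by rw [hj, Int.gcd_zero_right]
    have hmax : max (u i).natAbs (u j).natAbs = (u i).natAbs := by
      rw [hj]; simp
    have hna : 0 < (u i).natAbs := Int.natAbs_pos.mpr hi
    have hdiv : (2*T*Int.gcd (u i) (u j)) / (max (u i).natAbs (u j).natAbs) = 2*T := by
      rw [hgcd, hmax, Nat.mul_div_cancel _ hna]
    rw [hdiv]
    calc Nfib T u m ≤ (2*T+1)^(d-1) := h1
      _ = (2*T+1) * (2*T+1)^(d-2) := by
          rw [← pow_succ']
          congr 1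
          omega
      _ ≤ (2*(2*T)+1) * (2*T+1)^(d-2) := Nat.mul_le_mul_right _ (by omega)
  · exact Ms_le (fun m => Nfib_le_pin2 T u m hij hi hj)

lemma claimIII {T : ℕ} (hd : 2 ≤ d) :
    ∑ u ∈ Box d T, ((Ms T u : ℕ) : ℝ)
      ≤ 12 * d^2 * ((2*T+1:ℝ))^(2*d-2) * (1 + hsum T) := by
  classical
  have hbase : (1:ℝ) ≤ (2*T+1:ℝ) := by norm_num
  -- split off u = 0
  rw [← Finset.sum_filter_add_sum_filter_not (Box d T) (fun u => u = 0)
    (fun u => ((Ms T u : ℕ) : ℝ))]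
  have piece0 : ∑ u ∈ (Box d T).filter (fun u => u = 0), ((Ms T u : ℕ) : ℝ)
      ≤ ((2*T+1:ℝ))^(2*d-2) := by
    have hcard : ((Box d T).filter (fun u => u = 0)).card ≤ 1 := by
      have : ((Box d T).filter (fun u => u = 0)) ⊆ {0} := by
        intro u hu
        simp [(Finset.mem_filter.mp hu).2]
      calc _ ≤ ({0} : Finset (Fin d → ℤ)).card := Finset.card_le_card this
        _ = 1 := Finset.card_singleton _
    have hterm : ∀ u ∈ (Box d T).filter (fun u => u = 0), ((Ms T u : ℕ) : ℝ)
        ≤ ((2*T+1:ℝ))^(2*d-2) := by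
      intro u _
      have h1 : Ms T u ≤ (2*T+1)^d := Ms_le (fun m => Nfib_le_box T u m)
      calc ((Ms T u : ℕ) : ℝ) ≤ ((2*T+1:ℕ)^d : ℝ) := by exact_mod_cast h1
        _ = ((2*T+1:ℝ))^d := by push_cast; ring
        _ ≤ ((2*T+1:ℝ))^(2*d-2) := pow_le_pow_right₀ hbase (by omega)
    calc ∑ u ∈ (Box d T).filter (fun u => u = 0), ((Ms T u : ℕ) : ℝ)
        ≤ ∑ u ∈ (Box d T).filter (fun u => u = 0), ((2*T+1:ℝ))^(2*d-2) :=
          Finset.sum_le_sum hterm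
      _ = ((Box d T).filter (fun u => u = 0)).card * ((2*T+1:ℝ))^(2*d-2) := by
          rw [Finset.sum_const, nsmul_eq_mul]
      _ ≤ 1 * ((2*T+1:ℝ))^(2*d-2) := by
          apply mul_le_mul_of_nonneg_right _ (by positivity)
          exact_mod_cast hcard
      _ = ((2*T+1:ℝ))^(2*d-2) := one_mul _
  -- the main piece
  set fB : (Fin d × Fin d) → (Fin d → ℤ) → ℝ := fun q u =>
    if u q.1 ≠ 0 then (((2 * ((2*T*Int.gcd (u q.1) (u q.2)) /
      (max (u q.1).natAbs (u q.2).natAbs)) + 1) * (2*T+1)^(d-2) : ℕ) : ℝ) else 0 with hfB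
  have hfB_nonneg : ∀ q u, 0 ≤ fB q u := by
    intro q u
    rw [hfB]
    simp only
    split <;> positivity
  have hpt : ∀ u ∈ (Box d T).filter (fun u => ¬ (u = 0)), ((Ms T u : ℕ) : ℝ)
      ≤ ∑ q ∈ Finset.univ.offDiag, fB q u := by
    intro u hu
    have hu0 : u ≠ 0 := (Finset.mem_filter.mp hu).2
    obtain ⟨i, hi⟩ := Function.ne_iff.mp hu0
    haveI : Nontrivial (Fin d) := ⟨⟨⟨0, by omega⟩, ⟨1, by omega⟩, by simp [Fin.ext_iff]⟩⟩
    obtain ⟨j, hji⟩ := exists_ne i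
    have hij : i ≠ j := hji.symm
    have hmem : (i, j) ∈ Finset.univ.offDiag := by
      rw [Finset.mem_offDiag]
      exact ⟨Finset.mem_univ _, Finset.mem_univ _, hij⟩
    have hsingle := Finset.single_le_sum (f := fun q => fB q u)
      (fun q _ => hfB_nonneg q u) hmem
    refine le_trans ?_ hsingle
    rw [hfB]
    simp only
    have hi' : u i ≠ 0 := by simpa using hi
    rw [if_pos hi']
    exact_mod_cast MsBound hij hi'
  have hswap : ∑ u ∈ (Box d T).filter (fun u => ¬ (u = 0)), ((Ms T u : ℕ) : ℝ)
      ≤ ∑ q ∈ Finset.univ.offDiag, ∑ u ∈ Box d T, fB q u := by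
    calc ∑ u ∈ (Box d T).filter (fun u => ¬ (u = 0)), ((Ms T u : ℕ) : ℝ)
        ≤ ∑ u ∈ (Box d T).filter (fun u => ¬ (u = 0)), ∑ q ∈ Finset.univ.offDiag, fB q u :=
          Finset.sum_le_sum hpt
      _ ≤ ∑ u ∈ Box d T, ∑ q ∈ Finset.univ.offDiag, fB q u := by
          apply Finset.sum_le_sum_of_subset_of_nonneg (Finset.filter_subset _ _)
          intro u _ _
          exact Finset.sum_nonneg (fun q _ => hfB_nonneg q u)
      _ = ∑ q ∈ Finset.univ.offDiag, ∑ u ∈ Box d T, fB q u := Finset.sum_comm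
  -- bound the inner sum for each q
  have hinner : ∀ q ∈ (Finset.univ : Finset (Fin d)).offDiag,
      ∑ u ∈ Box d T, fB q u
      ≤ ((2*T+1:ℝ))^(2*d-2) * (8 * hsum T + 3) := by
    intro q hq
    have hij : q.1 ≠ q.2 := (Finset.mem_offDiag.mp hq).2.2
    set H : ℤ × ℤ → ℝ := fun p =>
      if p.1 ≠ 0 then (((2 * ((2*T*Int.gcd p.1 p.2) /
        (max p.1.natAbs p.2.natAbs)) + 1) * (2*T+1)^(d-2) : ℕ) : ℝ) else 0 with hH
    have hH_nonneg : ∀ p, 0 ≤ H p := by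
      intro p; rw [hH]; simp only; split <;> positivity
    have he : ∀ u, fB q u = H (u q.1, u q.2) := by
      intro u; rw [hfB, hH]
    have h1 : ∑ u ∈ Box d T, fB q u
        ≤ ((2*T+1)^(d-2) : ℕ) * ∑ p ∈ Finset.Icc (-(T:ℤ)) T ×ˢ Finset.Icc (-(T:ℤ)) T, H p := by
      rw [Finset.sum_congr rfl (fun u _ => he u)]
      exact sum_two_coords hij H hH_nonneg
    have h2 : ∀ p : ℤ × ℤ, H p ≤ ((2*T+1:ℝ))^(d-2)
        * (4*T*(if p.1 ≠ 0 then ratio p.1 p.2 else 0) + 1) := by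
      intro p
      rw [hH]
      simp only
      by_cases hp1 : p.1 = 0
      · rw [if_neg (by tauto), if_neg (by tauto)]
        positivity
      · rw [if_pos hp1, if_pos hp1]
        push_cast
        have hk : (((2*T*Int.gcd p.1 p.2) / (max p.1.natAbs p.2.natAbs) : ℕ) : ℝ)
            ≤ 2*T*ratio p.1 p.2 := by
          calc (((2*T*Int.gcd p.1 p.2) / (max p.1.natAbs p.2.natAbs) : ℕ) : ℝ)
              ≤ ((2*T*Int.gcd p.1 p.2 : ℕ):ℝ) / ((max p.1.natAbs p.2.natAbs : ℕ):ℝ) :=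
                Nat.cast_div_le
            _ = 2*T*ratio p.1 p.2 := by
                unfold ratio
                push_cast
                ring
        have hpow : (0:ℝ) ≤ ((2*T+1:ℝ))^(d-2) := by positivity
        nlinarith [mul_le_mul_of_nonneg_right hk hpow, hpow]
    -- sum the pointwise bound
    have h3 : ∑ p ∈ Finset.Icc (-(T:ℤ)) T ×ˢ Finset.Icc (-(T:ℤ)) T, H p
        ≤ ((2*T+1:ℝ))^(d-2) * ((2*T+1:ℝ))^2 * (8 * hsum T + 3) := by
      have hcardA : (Finset.Icc (-(T:ℤ)) T ×ˢ Finset.Icc (-(T:ℤ)) T).card = (2*T+1)^2 := by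
        rw [Finset.card_product, Int.card_Icc]
        have : ((T:ℤ) + 1 - (-T)).toNat = 2*T+1 := by omega
        rw [this]; ring
      calc ∑ p ∈ Finset.Icc (-(T:ℤ)) T ×ˢ Finset.Icc (-(T:ℤ)) T, H p
          ≤ ∑ p ∈ Finset.Icc (-(T:ℤ)) T ×ˢ Finset.Icc (-(T:ℤ)) T,
            ((2*T+1:ℝ))^(d-2) * (4*T*(if p.1 ≠ 0 then ratio p.1 p.2 else 0) + 1) :=
            Finset.sum_le_sum (fun p _ => h2 p)
        _ = ((2*T+1:ℝ))^(d-2) * (4*T* (∑ p ∈ Finset.Icc (-(T:ℤ)) T ×ˢ Finset.Icc (-(T:ℤ)) T,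
              (if p.1 ≠ 0 then ratio p.1 p.2 else 0))
              + (Finset.Icc (-(T:ℤ)) T ×ˢ Finset.Icc (-(T:ℤ)) T).card) := by
            simp only [Finset.sum_add_distrib, Finset.sum_const, nsmul_eq_mul, mul_one,
              ← Finset.mul_sum]
            try ring
        _ ≤ ((2*T+1:ℝ))^(d-2) * (4*T* (8 * T * hsum T + (2*T+1)) + ((2*T+1:ℝ))^2) := by
            apply mul_le_mul_of_nonneg_left _ (by positivity)
            have hGI := gcd_sum_int T
            have hc : ((Finset.Icc (-(T:ℤ)) T ×ˢ Finset.Icc (-(T:ℤ)) T).card : ℝ)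
                = ((2*T+1:ℝ))^2 := by
              rw [hcardA]; push_cast; ring
            rw [hc]
            have hT0 : (0:ℝ) ≤ 4*T := by positivity
            nlinarith [hGI]
        _ ≤ ((2*T+1:ℝ))^(d-2) * (((2*T+1:ℝ))^2 * (8 * hsum T + 3)) := by
            apply mul_le_mul_of_nonneg_left _ (by positivity)
            have h8 : 4*(T:ℝ)*(8*T*hsum T) ≤ 8 * ((2*T+1:ℝ))^2 * hsum T := by
              nlinarith [hsum_nonneg T, Nat.cast_nonneg (α := ℝ) T]
            nlinarith [hsum_nonneg T, Nat.cast_nonneg (α := ℝ) T]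
        _ = ((2*T+1:ℝ))^(d-2) * ((2*T+1:ℝ))^2 * (8 * hsum T + 3) := by ring
    have hcast2 : (((2*T+1)^(d-2) : ℕ) : ℝ) = ((2*T+1:ℝ))^(d-2) := by push_cast; ring
    calc ∑ u ∈ Box d T, fB q u
        ≤ ((2*T+1)^(d-2) : ℕ) * ∑ p ∈ Finset.Icc (-(T:ℤ)) T ×ˢ Finset.Icc (-(T:ℤ)) T, H p := h1
      _ ≤ ((2*T+1:ℝ))^(d-2) * (((2*T+1:ℝ))^(d-2) * ((2*T+1:ℝ))^2 * (8 * hsum T + 3)) := by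
          rw [hcast2]
          apply mul_le_mul_of_nonneg_left h3 (by positivity)
      _ = ((2*T+1:ℝ))^((d-2)+(d-2)+2) * (8 * hsum T + 3) := by
          rw [pow_add, pow_add]; ring
      _ = ((2*T+1:ℝ))^(2*d-2) * (8 * hsum T + 3) := by
          congr 2
          omega
      _ ≤ ((2*T+1:ℝ))^(2*d-2) * (8 * hsum T + 3) := le_refl _
  -- combine
  have hcardOD : (((Finset.univ : Finset (Fin d)).offDiag.card : ℕ) : ℝ) ≤ (d:ℝ)^2 := by
    rw [Finset.offDiag_card, Finset.card_univ, Fintype.card_fin]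
    have : d * d - d ≤ d * d := Nat.sub_le _ _
    calc ((d * d - d : ℕ) : ℝ) ≤ ((d * d : ℕ) : ℝ) := by exact_mod_cast this
      _ = (d:ℝ)^2 := by push_cast; ring
  have hmain : ∑ q ∈ (Finset.univ : Finset (Fin d)).offDiag, ∑ u ∈ Box d T, fB q u
      ≤ (d:ℝ)^2 * (((2*T+1:ℝ))^(2*d-2) * (8 * hsum T + 3)) := by
    calc ∑ q ∈ (Finset.univ : Finset (Fin d)).offDiag, ∑ u ∈ Box d T, fB q u
        ≤ ∑ q ∈ (Finset.univ : Finset (Fin d)).offDiag,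
            ((2*T+1:ℝ))^(2*d-2) * (8 * hsum T + 3) := Finset.sum_le_sum hinner
      _ = (((Finset.univ : Finset (Fin d)).offDiag.card : ℕ) : ℝ)
            * (((2*T+1:ℝ))^(2*d-2) * (8 * hsum T + 3)) := by
          rw [Finset.sum_const, nsmul_eq_mul]
      _ ≤ (d:ℝ)^2 * (((2*T+1:ℝ))^(2*d-2) * (8 * hsum T + 3)) := by
          apply mul_le_mul_of_nonneg_right hcardOD
          have := hsum_nonneg T
          positivity
  have hfinal := add_le_add piece0 (le_trans hswap hmain)
  refine le_trans hfinal ?_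
  have hh := hsum_nonneg T
  have hd' : (2:ℝ) ≤ (d:ℝ) := by exact_mod_cast hd
  have hPpos : (0:ℝ) < ((2*T+1:ℝ))^(2*d-2) := by positivity
  nlinarith [hPpos, hh, hd', sq_nonneg ((d:ℝ) - 2), mul_pos hPpos (by nlinarith : (0:ℝ) < (d:ℝ)^2)]

end MsSection

section Master
variable {d : ℕ}

lemma Box_mono {S T : ℕ} (hST : S ≤ T) : Box d S ⊆ Box d T := by
  intro u hu
  rw [mem_Box] at *
  intro i
  have := hu i
  omega

lemma dot_bound {T : ℕ} {u w : Fin d → ℤ} (hu : u ∈ Box d T) (hw : w ∈ Box d T) :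
    dotz u w ∈ Finset.Icc (-((d*T*T : ℕ):ℤ)) ((d*T*T : ℕ):ℤ) := by
  have habs : |dotz u w| ≤ ((d*T*T : ℕ):ℤ) := by
    rw [dotz]
    calc |∑ i, u i * w i| ≤ ∑ i, |u i * w i| := Finset.abs_sum_le_sum_abs _ _
      _ ≤ ∑ _i : Fin d, ((T*T:ℕ):ℤ) := by
          apply Finset.sum_le_sum
          intro i _
          rw [abs_mul]
          have h1 := mem_Box.mp hu i
          have h2 := mem_Box.mp hw i
          have e1 : |u i| ≤ (T:ℤ) := abs_le.mpr ⟨h1.1, h1.2⟩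
          have e2 : |w i| ≤ (T:ℤ) := abs_le.mpr ⟨h2.1, h2.2⟩
          calc |u i| * |w i| ≤ (T:ℤ) * (T:ℤ) :=
                mul_le_mul e1 e2 (abs_nonneg _) (by positivity)
            _ = ((T*T:ℕ):ℤ) := by push_cast; ring
      _ = ((d*T*T:ℕ):ℤ) := by
          rw [Finset.sum_const, Finset.card_univ, Fintype.card_fin, nsmul_eq_mul]
          push_cast; ring
  rw [Finset.mem_Icc]
  have := abs_le.mp habs
  exact ⟨this.1, this.2⟩

lemma masterLemma (hd : 2 ≤ d) {κ : ℝ} (hκ : 0 < κ) :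
    ∃ C : ℝ, 0 < C ∧ ∀ S T : ℕ, 1 ≤ S → S ≤ T →
      ∀ bf : (Fin d → ℤ) → (Fin d → ℤ), Set.InjOn bf (Box d S) →
      (∀ v ∈ Box d S, bf v ∈ Box d T) →
      ∀ c : (Fin d → ℤ) → ℝ,
      ∑ v ∈ Box d S, ∑ w ∈ Box d S, DD (2*((dotz (bf v) w : ℤ):ℝ) + c v)
        ≤ C * ((T:ℝ)) ^ ((2*(d:ℝ) - 2) + κ) := by
  have hκ2 : 0 < κ/2 := by linarith
  set Cκ : ℝ := 1 + (κ/2)⁻¹ with hCκ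
  have hCκpos : 0 < Cκ := by rw [hCκ]; positivity
  have hlog3d : 0 ≤ Real.log (3*d) := by
    apply Real.log_nonneg
    have : (1:ℝ) ≤ (d:ℝ) := by exact_mod_cast (by omega : 1 ≤ d)
    linarith
  set Kd : ℝ := 24 * d^2 * (7 + 2*Real.log (3*d)) with hKd
  have hKdpos : 0 < Kd := by
    rw [hKd]
    have : (0:ℝ) < (d:ℝ)^2 := by positivity
    nlinarith
  refine ⟨Kd * 3^(2*d-2) * Cκ^2, by positivity, ?_⟩
  intro S T hS hST bf hinj hmap c
  have hT : 1 ≤ T := le_trans hS hST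
  have hT0 : (0:ℝ) < (T:ℝ) := by exact_mod_cast hT
  have hT1 : (1:ℝ) ≤ (T:ℝ) := by exact_mod_cast hT
  set I : ℕ := d*T*T with hI
  set L : ℝ := 1 + 2 * hsum (2*I+1) with hL
  have hLpos : 0 ≤ L := by
    rw [hL]
    have := hsum_nonneg (2*I+1)
    linarith
  -- inner sum bound
  have hinnerB : ∀ v ∈ Box d S, ∑ w ∈ Box d S, DD (2*((dotz (bf v) w : ℤ):ℝ) + c v)
      ≤ ((Ms T (bf v) : ℕ) : ℝ) * L := by
    intro v hv
    set u := bf v with hu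
    have huT : u ∈ Box d T := hmap v hv
    have hfib := Finset.sum_fiberwise_eq_sum_filter (Box d S)
      (Finset.Icc (-(I:ℤ)) I) (fun w => dotz u w)
      (fun w => DD (2*((dotz u w : ℤ):ℝ) + c v))
    have hfil : (Box d S).filter (fun w => dotz u w ∈ Finset.Icc (-(I:ℤ)) I) = Box d S := by
      apply Finset.filter_true_of_mem
      intro w hw
      exact dot_bound huT (Box_mono hST hw)
    rw [hfil] at hfib
    rw [← hfib]
    have hstep : ∀ m ∈ Finset.Icc (-(I:ℤ)) I,
        ∑ w ∈ (Box d S).filter (fun w => dotz u w = m), DD (2*((dotz u w : ℤ):ℝ) + c v)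
        ≤ ((Ms T u : ℕ) : ℝ) * DD (2*(m:ℝ) + c v) := by
      intro m hm
      have hval : ∀ w ∈ (Box d S).filter (fun w => dotz u w = m),
          DD (2*((dotz u w : ℤ):ℝ) + c v) = DD (2*(m:ℝ) + c v) := by
        intro w hw
        rw [(Finset.mem_filter.mp hw).2]
      rw [Finset.sum_congr rfl hval, Finset.sum_const, nsmul_eq_mul]
      apply mul_le_mul_of_nonneg_right _ (DD_nonneg _)
      have hcard : ((Box d S).filter (fun w => dotz u w = m)).card ≤ Ms T u := by
        have hsub : ((Box d S).filter (fun w => dotz u w = m))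
            ⊆ ((Box d T).filter (fun w => dotz u w = m)) :=
          Finset.filter_subset_filter _ (Box_mono hST)
        calc ((Box d S).filter (fun w => dotz u w = m)).card
            ≤ ((Box d T).filter (fun w => dotz u w = m)).card := Finset.card_le_card hsub
          _ = Nfib T u m := rfl
          _ ≤ Ms T u := Finset.le_sup hm
      exact_mod_cast hcard
    calc ∑ m ∈ Finset.Icc (-(I:ℤ)) I,
          ∑ w ∈ (Box d S).filter (fun w => dotz u w = m), DD (2*((dotz u w : ℤ):ℝ) + c v)
        ≤ ∑ m ∈ Finset.Icc (-(I:ℤ)) I, ((Ms T u : ℕ) : ℝ) * DD (2*(m:ℝ) + c v) :=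
          Finset.sum_le_sum hstep
      _ = ((Ms T u : ℕ) : ℝ) * ∑ m ∈ Finset.Icc (-(I:ℤ)) I, DD (2*(m:ℝ) + c v) := by
          rw [Finset.mul_sum]
      _ ≤ ((Ms T u : ℕ) : ℝ) * L := by
          apply mul_le_mul_of_nonneg_left _ (by positivity)
          rw [hL]
          have := sum_DD_shift (-(I:ℤ)) I (c v)
          have harg : ((I:ℤ) - (-(I:ℤ)) + 1).toNat = 2*I+1 := by omega
          rwa [harg] at this
  -- outer sum
  have houter : ∑ v ∈ Box d S, ((Ms T (bf v) : ℕ) : ℝ)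
      ≤ 12 * d^2 * ((2*T+1:ℝ))^(2*d-2) * (1 + hsum T) := by
    calc ∑ v ∈ Box d S, ((Ms T (bf v) : ℕ) : ℝ)
        = ∑ u ∈ (Box d S).image bf, ((Ms T u : ℕ) : ℝ) := by
          rw [Finset.sum_image (fun x hx y hy h => hinj hx hy h)]
      _ ≤ ∑ u ∈ Box d T, ((Ms T u : ℕ) : ℝ) := by
          apply Finset.sum_le_sum_of_subset_of_nonneg
          · intro u hu
            obtain ⟨v, hv, rfl⟩ := Finset.mem_image.mp hu
            exact hmap v hv
          · intro u _ _
            positivity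
      _ ≤ 12 * d^2 * ((2*T+1:ℝ))^(2*d-2) * (1 + hsum T) := claimIII hd
  have hcombine : ∑ v ∈ Box d S, ∑ w ∈ Box d S, DD (2*((dotz (bf v) w : ℤ):ℝ) + c v)
      ≤ (12 * d^2 * ((2*T+1:ℝ))^(2*d-2) * (1 + hsum T)) * L := by
    calc ∑ v ∈ Box d S, ∑ w ∈ Box d S, DD (2*((dotz (bf v) w : ℤ):ℝ) + c v)
        ≤ ∑ v ∈ Box d S, ((Ms T (bf v) : ℕ) : ℝ) * L := Finset.sum_le_sum hinnerB
      _ = (∑ v ∈ Box d S, ((Ms T (bf v) : ℕ) : ℝ)) * L := by rw [Finset.sum_mul]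
      _ ≤ _ := by
          apply mul_le_mul_of_nonneg_right houter hLpos
  -- estimate L and hsum by logs
  have hlogT : 0 ≤ Real.log T := Real.log_nonneg hT1
  have hLbound : L ≤ (7 + 2*Real.log (3*d)) * (1 + Real.log T) := by
    rw [hL]
    have h1 : hsum (2*I+1) ≤ 1 + Real.log ((2*I+1 : ℕ)) := hsum_le_log _
    have h2 : Real.log ((2*I+1 : ℕ)) ≤ Real.log (3*d*T^2) := by
      apply Real.log_le_log (by positivity)
      rw [hI]
      push_cast
      have : (1:ℝ) ≤ (d:ℝ)*(T:ℝ)^2 := by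
        have hd1 : (1:ℝ) ≤ (d:ℝ) := by exact_mod_cast (by omega : 1 ≤ d)
        nlinarith
      nlinarith
    have h3 : Real.log (3*d*T^2) = Real.log (3*d) + 2*Real.log T := by
      rw [Real.log_mul (by positivity) (by positivity), Real.log_pow]
      push_cast
      ring
    nlinarith
  have hhs : 1 + hsum T ≤ 2 * (1 + Real.log T) := by
    have := hsum_le_log T
    nlinarith
  -- powers
  have hpow1 : ((2*T+1:ℝ))^(2*d-2) ≤ 3^(2*d-2) * (T:ℝ)^(2*d-2) := by
    calc ((2*T+1:ℝ))^(2*d-2) ≤ ((3*T:ℝ))^(2*d-2) := by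
          apply pow_le_pow_left₀ (by positivity)
          linarith
      _ = 3^(2*d-2) * (T:ℝ)^(2*d-2) := mul_pow _ _ _
  have hlogpow : (1 + Real.log T) ≤ Cκ * (T:ℝ) ^ (κ/2) := by
    have := log_le_rpow hκ2 (T:ℝ) hT1
    rwa [hCκ]
  have hrpow_pos : (0:ℝ) < (T:ℝ) ^ (κ/2) := Real.rpow_pos_of_pos hT0 _
  -- final assembly
  calc ∑ v ∈ Box d S, ∑ w ∈ Box d S, DD (2*((dotz (bf v) w : ℤ):ℝ) + c v)
      ≤ (12 * d^2 * ((2*T+1:ℝ))^(2*d-2) * (1 + hsum T)) * L := hcombine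
    _ ≤ (12 * d^2 * ((2*T+1:ℝ))^(2*d-2) * (2 * (1 + Real.log T)))
        * ((7 + 2*Real.log (3*d)) * (1 + Real.log T)) := by
        apply mul_le_mul
        · apply mul_le_mul_of_nonneg_left hhs
          positivity
        · exact hLbound
        · exact hLpos
        · have h1 : (0:ℝ) ≤ 1 + Real.log T := by linarith
          positivity
    _ = Kd * ((2*T+1:ℝ))^(2*d-2) * (1 + Real.log T)^2 := by
        rw [hKd]; ring
    _ ≤ Kd * (3^(2*d-2) * (T:ℝ)^(2*d-2)) * (Cκ * (T:ℝ) ^ (κ/2))^2 := by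
        apply mul_le_mul
        · exact mul_le_mul_of_nonneg_left hpow1 (le_of_lt hKdpos)
        · apply pow_le_pow_left₀ (by linarith) hlogpow
        · positivity
        · positivity
    _ = (Kd * 3^(2*d-2) * Cκ^2) * ((T:ℝ)^(2*d-2) * ((T:ℝ) ^ (κ/2) * (T:ℝ) ^ (κ/2))) := by
        ring
    _ = (Kd * 3^(2*d-2) * Cκ^2) * ((T:ℝ)) ^ ((2*(d:ℝ) - 2) + κ) := by
        congr 1
        rw [← Real.rpow_add hT0]
        have h1 : (T:ℝ)^(2*d-2) = (T:ℝ) ^ (((2*d-2:ℕ)):ℝ) := by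
          rw [Real.rpow_natCast]
        rw [h1, ← Real.rpow_add hT0]
        congr 1
        have : ((2*d-2:ℕ):ℝ) = 2*(d:ℝ) - 2 := by
          have : 2 ≤ 2*d := by omega
          push_cast [Nat.cast_sub this]
          ring
        rw [this]
        ring

end Master

section Final
variable {d : ℕ}

lemma coord_bound (k : Fin d → ℤ) (i : Fin d) : |(k i : ℝ)| ≤ znorm k := by
  rw [znorm, ← Real.sqrt_sq_eq_abs]
  apply Real.sqrt_le_sqrt
  rw [nsq]
  exact Finset.single_le_sum (f := fun i => ((k i:ℝ))^2) (fun i _ => by positivity)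
    (Finset.mem_univ i)

lemma mem_Box_of_znorm {S : ℕ} {k : Fin d → ℤ} (h : znorm k ≤ (S:ℝ)) : k ∈ Box d S := by
  rw [mem_Box]
  intro i
  have h1 : |(k i : ℝ)| ≤ (S:ℝ) := le_trans (coord_bound k i) h
  rw [← Int.cast_abs] at h1
  have h2 : |k i| ≤ (S:ℤ) := by exact_mod_cast h1
  have h3 := abs_le.mp h2
  exact ⟨h3.1, h3.2⟩

lemma nsq_expand (x y : Fin d → ℤ) :
    nsq (x - y) = nsq x - 2*((dotz x y : ℤ):ℝ) + nsq y := by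
  have key : ∀ i, (((x - y) i : ℤ):ℝ)^2
      = ((x i:ℝ))^2 - 2*((x i * y i : ℤ):ℝ) + ((y i:ℝ))^2 := by
    intro i
    have : (x - y) i = x i - y i := rfl
    rw [this]
    push_cast
    ring
  rw [nsq, Finset.sum_congr rfl (fun i _ => key i)]
  rw [Finset.sum_add_distrib, Finset.sum_sub_distrib]
  rw [nsq, nsq, dotz]
  push_cast
  rw [Finset.mul_sum]

lemma znorm_nonneg (k : Fin d → ℤ) : 0 ≤ znorm k := Real.sqrt_nonneg _

/-- termwise bound by DD -/
lemma term_le_DD {ε α β σ σ' : ℝ} (hβ : 1 ≤ β) (k₀ : Fin d → ℤ)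
    (p : (Fin d → ℤ) × (Fin d → ℤ)) :
    (if znorm p.1 < ε⁻¹ ∧ znorm p.2 < ε⁻¹ then
      (‖(((nsq p.1 + σ' * nsq p.2 + σ * nsq (k₀ - p.1 - p.2) - α : ℝ) : ℂ)
        + Complex.I * (β : ℂ))‖)⁻¹
    else 0)
    ≤ DD (nsq p.1 + σ' * nsq p.2 + σ * nsq (k₀ - p.1 - p.2) - α) := by
  set X : ℝ := nsq p.1 + σ' * nsq p.2 + σ * nsq (k₀ - p.1 - p.2) - α with hX
  split
  · set z : ℂ := ((X : ℝ) : ℂ) + Complex.I * (β : ℂ) with hz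
    have hre : z.re = X := by rw [hz]; simp
    have him : z.im = β := by rw [hz]; simp
    have h1 : (1:ℝ) ≤ ‖z‖ := by
      calc (1:ℝ) ≤ β := hβ
        _ = |z.im| := by rw [him]; rw [abs_of_nonneg (by linarith)]
        _ ≤ ‖z‖ := Complex.abs_im_le_norm z
    have h2 : |X| ≤ ‖z‖ := by
      rw [← hre]
      exact Complex.abs_re_le_norm z
    have hmax : max 1 |X| ≤ ‖z‖ := max_le h1 h2
    rw [DD]
    exact inv_anti₀ (by positivity) hmax
  · exact DD_nonneg _

theorem degree_two_vertex_sum' (hd : 2 ≤ d) (κ : ℝ) (hκ : 0 < κ) :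
    ∃ C : ℝ, 0 < C ∧
      ∀ ε : ℝ, 0 < ε → ε ≤ 1 →
      ∀ k₀ : Fin d → ℤ, znorm k₀ ≤ ε⁻¹ →
      ∀ α β : ℝ, 1 ≤ β →
      ∀ σ σ' : ℝ, (σ = 1 ∨ σ = -1) → (σ' = 1 ∨ σ' = -1) → ¬(σ = 1 ∧ σ' = 1) →
        (∑' p : (Fin d → ℤ) × (Fin d → ℤ),
          if znorm p.1 < ε⁻¹ ∧ znorm p.2 < ε⁻¹ then
            (‖(((nsq p.1 + σ' * nsq p.2 + σ * nsq (k₀ - p.1 - p.2) - α : ℝ) : ℂ)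
              + Complex.I * (β : ℂ))‖)⁻¹
          else 0)
        ≤ C * ε ^ (2 - 2*(d:ℝ) - κ) := by
  obtain ⟨C₀, hC₀pos, hC₀⟩ := masterLemma hd hκ
  set r : ℝ := (2*(d:ℝ) - 2) + κ with hr
  have hrpos : 0 ≤ r := by
    rw [hr]
    have : (2:ℝ) ≤ (d:ℝ) := by exact_mod_cast hd
    linarith
  refine ⟨C₀ * 4 ^ r, by positivity, ?_⟩
  intro ε hε hε1 k₀ hk₀ α β hβ σ σ' hσ hσ' hσσ'
  have hεinv : 1 ≤ ε⁻¹ := one_le_inv_iff₀.mpr ⟨hε, hε1⟩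
  set S : ℕ := ⌈ε⁻¹⌉₊ with hSdef
  have hS1 : 1 ≤ S := by
    rw [hSdef]
    exact Nat.one_le_ceil_iff.mpr (by linarith)
  have hSge : ε⁻¹ ≤ (S:ℝ) := Nat.le_ceil _
  have hSlt : (S:ℝ) < ε⁻¹ + 1 := by
    rw [hSdef]
    exact Nat.ceil_lt_add_one (by linarith)
  have hSle : (S:ℝ) ≤ 2*ε⁻¹ := by linarith
  set T : ℕ := 2*S with hTdef
  have hST : S ≤ T := by omega
  -- membership of k₀
  have hk₀S : k₀ ∈ Box d S := mem_Box_of_znorm (le_trans hk₀ hSge)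
  -- the finite support set
  set P : Finset ((Fin d → ℤ) × (Fin d → ℤ)) := Box d S ×ˢ Box d S with hP
  set f : ((Fin d → ℤ) × (Fin d → ℤ)) → ℝ := fun p =>
    if znorm p.1 < ε⁻¹ ∧ znorm p.2 < ε⁻¹ then
      (‖(((nsq p.1 + σ' * nsq p.2 + σ * nsq (k₀ - p.1 - p.2) - α : ℝ) : ℂ)
        + Complex.I * (β : ℂ))‖)⁻¹
    else 0 with hf
  have hsupp : ∀ p ∉ P, f p = 0 := by
    intro p hp
    rw [hf]
    simp only
    rw [if_neg]
    intro hcond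
    apply hp
    rw [hP]
    apply Finset.mem_product.mpr
    constructor
    · exact mem_Box_of_znorm (le_trans (le_of_lt hcond.1) hSge)
    · exact mem_Box_of_znorm (le_trans (le_of_lt hcond.2) hSge)
  have htsum : ∑' p, f p = ∑ p ∈ P, f p := tsum_eq_sum hsupp
  have hstep1 : ∑ p ∈ P, f p
      ≤ ∑ p ∈ P, DD (nsq p.1 + σ' * nsq p.2 + σ * nsq (k₀ - p.1 - p.2) - α) :=
    Finset.sum_le_sum (fun p _ => term_le_DD hβ k₀ p)
  -- properties of bf
  set bf : (Fin d → ℤ) → (Fin d → ℤ) := fun v => k₀ - v with hbf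
  have hbfinj : Set.InjOn bf (Box d S) := by
    intro x _ y _ h
    have h' : k₀ - x = k₀ - y := h
    exact sub_right_injective h'
  have hbfmap : ∀ v ∈ Box d S, bf v ∈ Box d T := by
    intro v hv
    rw [mem_Box]
    intro i
    have h1 := (mem_Box.mp hk₀S i)
    have h2 := (mem_Box.mp hv i)
    have hval : bf v i = k₀ i - v i := rfl
    rw [hval, hTdef]
    push_cast
    omega
  -- case analysis: reduce to the master lemma
  have hmaster : ∑ p ∈ P, DD (nsq p.1 + σ' * nsq p.2 + σ * nsq (k₀ - p.1 - p.2) - α)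
      ≤ C₀ * ((T:ℝ)) ^ r := by
    rcases hσ with hσ1 | hσ1
    · rcases hσ' with hσ'1 | hσ'1
      · exact absurd ⟨hσ1, hσ'1⟩ hσσ'
      · -- σ = 1, σ' = -1
        subst hσ1; subst hσ'1
        have hid : ∀ p : (Fin d → ℤ) × (Fin d → ℤ),
            DD (nsq p.1 + (-1) * nsq p.2 + 1 * nsq (k₀ - p.1 - p.2) - α)
            = DD (2*((dotz (bf p.1) p.2 : ℤ):ℝ) + (α - nsq p.1 - nsq (k₀ - p.1))) := by
          intro p
          rw [← DD_neg (2*((dotz (bf p.1) p.2 : ℤ):ℝ) + (α - nsq p.1 - nsq (k₀ - p.1)))]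
          congr 1
          have e : k₀ - p.1 - p.2 = (k₀ - p.1) - p.2 := rfl
          rw [e, nsq_expand (k₀ - p.1) p.2, hbf]
          ring
        rw [Finset.sum_congr rfl (fun p _ => hid p), hP, Finset.sum_product]
        exact hC₀ S T hS1 hST bf hbfinj hbfmap (fun v => α - nsq v - nsq (k₀ - v))
    · rcases hσ' with hσ'1 | hσ'1
      · -- σ = -1, σ' = 1
        subst hσ1; subst hσ'1
        have hid : ∀ p : (Fin d → ℤ) × (Fin d → ℤ),
            DD (nsq p.1 + 1 * nsq p.2 + (-1) * nsq (k₀ - p.1 - p.2) - α)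
            = DD (2*((dotz (bf p.1) p.2 : ℤ):ℝ) + (nsq p.1 - nsq (k₀ - p.1) - α)) := by
          intro p
          congr 1
          have e : k₀ - p.1 - p.2 = (k₀ - p.1) - p.2 := rfl
          rw [e, nsq_expand (k₀ - p.1) p.2, hbf]
          ring
        rw [Finset.sum_congr rfl (fun p _ => hid p), hP, Finset.sum_product]
        exact hC₀ S T hS1 hST bf hbfinj hbfmap (fun v => nsq v - nsq (k₀ - v) - α)
      · -- σ = -1, σ' = -1
        subst hσ1; subst hσ'1
        have hid : ∀ p : (Fin d → ℤ) × (Fin d → ℤ),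
            DD (nsq p.1 + (-1) * nsq p.2 + (-1) * nsq (k₀ - p.1 - p.2) - α)
            = DD (2*((dotz (bf p.2) p.1 : ℤ):ℝ) + (-nsq p.2 - nsq (k₀ - p.2) - α)) := by
          intro p
          congr 1
          have e : k₀ - p.1 - p.2 = (k₀ - p.2) - p.1 := sub_right_comm _ _ _
          rw [e, nsq_expand (k₀ - p.2) p.1, hbf]
          ring
        rw [Finset.sum_congr rfl (fun p _ => hid p), hP, Finset.sum_product]
        rw [Finset.sum_comm]
        exact hC₀ S T hS1 hST bf hbfinj hbfmap (fun v => -nsq v - nsq (k₀ - v) - α)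
  -- convert T-power to ε-power
  have hTle : (T:ℝ) ≤ 4 * ε⁻¹ := by
    rw [hTdef]
    push_cast
    linarith
  have hTpow : ((T:ℝ)) ^ r ≤ (4 * ε⁻¹) ^ r := by
    apply Real.rpow_le_rpow (by positivity) hTle hrpos
  have hεpow : (4 * ε⁻¹ : ℝ) ^ r = 4 ^ r * ε ^ (2 - 2*(d:ℝ) - κ) := by
    rw [Real.mul_rpow (by norm_num) (by positivity)]
    congr 1
    rw [Real.inv_rpow (le_of_lt hε), ← Real.rpow_neg (le_of_lt hε)]
    congr 1
    rw [hr]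
    ring
  calc ∑' p, f p = ∑ p ∈ P, f p := htsum
    _ ≤ ∑ p ∈ P, DD (nsq p.1 + σ' * nsq p.2 + σ * nsq (k₀ - p.1 - p.2) - α) := hstep1
    _ ≤ C₀ * ((T:ℝ)) ^ r := hmaster
    _ ≤ C₀ * (4 * ε⁻¹) ^ r := by
        apply mul_le_mul_of_nonneg_left hTpow (le_of_lt hC₀pos)
    _ = (C₀ * 4 ^ r) * ε ^ (2 - 2*(d:ℝ) - κ) := by
        rw [hεpow]; ring

end Final

/-- Degree two vertex estimate (Lemma B.1, sum version). -/
theorem degree_two_vertex_sum (d : ℕ) (hd : 2 ≤ d) (κ : ℝ) (hκ : 0 < κ) :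
    ∃ C : ℝ, 0 < C ∧
      ∀ ε : ℝ, 0 < ε → ε ≤ 1 →
      ∀ k₀ : Fin d → ℤ, znorm k₀ ≤ ε⁻¹ →
      ∀ α β : ℝ, 1 ≤ β →
      ∀ σ σ' : ℝ, (σ = 1 ∨ σ = -1) → (σ' = 1 ∨ σ' = -1) → ¬(σ = 1 ∧ σ' = 1) →
        (∑' p : (Fin d → ℤ) × (Fin d → ℤ),
          if znorm p.1 < ε⁻¹ ∧ znorm p.2 < ε⁻¹ then
            (‖(((nsq p.1 + σ' * nsq p.2 + σ * nsq (k₀ - p.1 - p.2) - α : ℝ) : ℂ)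
              + Complex.I * (β : ℂ))‖)⁻¹
          else 0)
        ≤ C * ε ^ (2 - 2*(d:ℝ) - κ) := by
  exact degree_two_vertex_sum' hd κ hκ

end KWE
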